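/- arXiv:1510.04843 — 4 statements merged into one kernel-verified Lean document; each statement's English description precedes it below -/
import Mathlib

section
/- If F is a forest, e an edge of F, and F' = F minus e, then ℓ(F') - 2·comp(F') ≤ ℓ(F) - 2·comp(F), where ℓ denotes the number of vertices of degree 1 and comp denotes the number of connected components containing at least one edge. -/
open SimpleGraph
open scoped Classical

/-- Degree of a vertex. -/
noncomputable def deg {V : Type} (G : SimpleGraph V) (v : V) : ℕ := Nat.card (G.neighborSet v)

/-- Number of vertices of degree exactly 1 (leaves for trees/forests). -/
noncomputable def numLeaves {V : Type} (G : SimpleGraph V) : ℕ := Nat.card {v : V // deg G v = 1}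

/-- Number of connected components containing at least one edge. -/
noncomputable def numEdgeComps {V : Type} (G : SimpleGraph V) : ℕ :=
  Nat.card {c : G.ConnectedComponent // ∃ v w : V, G.Adj v w ∧ G.connectedComponentMk v = c}

/-- Maximum degree. -/
noncomputable def maxDeg {V : Type} (G : SimpleGraph V) : ℕ := sSup (Set.range (deg G))

/-- `G` and `H` pack: a bijection sends edges of `H` to non-edges of `G`. -/
def Packs {V W : Type} (G : SimpleGraph V) (H : SimpleGraph W) : Prop :=
  ∃ f : W ≃ V, ∀ x y : W, H.Adj x y → ¬ G.Adj (f x) (f y)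

/-- `G` contains a copy of `H` as a subgraph. -/
def ContainsCopy {V W : Type} (G : SimpleGraph V) (H : SimpleGraph W) : Prop :=
  ∃ f : W ↪ V, ∀ x y : W, H.Adj x y → G.Adj (f x) (f y)

/-- `G` realizes the degree sequence `π`. -/
def IsRealization {n : ℕ} (G : SimpleGraph (Fin n)) (π : Fin n → ℕ) : Prop :=
  ∀ i, deg G i = π i

/-- `π` is a graphic sequence. -/
def Graphic {n : ℕ} (π : Fin n → ℕ) : Prop :=
  ∃ G : SimpleGraph (Fin n), IsRealization G π

/-- `π` is potentially `H`-graphic. -/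
def PotentiallyGraphic {n : ℕ} {W : Type} (π : Fin n → ℕ) (H : SimpleGraph W) : Prop :=
  ∃ G : SimpleGraph (Fin n), IsRealization G π ∧ ContainsCopy G H

/-- The complementary sequence `π̄ = (n-1-d_n, …, n-1-d_1)`. -/
def compSeq {n : ℕ} (π : Fin n → ℕ) : Fin n → ℕ := fun i => n - 1 - π i.rev

/-- The potential-Ramsey number. -/
noncomputable def rpot {W₁ W₂ : Type} (H₁ : SimpleGraph W₁) (H₂ : SimpleGraph W₂) : ℕ :=
  sInf {N : ℕ | ∀ π : Fin N → ℕ, Antitone π → Graphic π →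
    PotentiallyGraphic π H₁ ∨ PotentiallyGraphic (compSeq π) H₂}

/-- The star `K_{1,t-1}` on `t` vertices, centered at vertex `0`. -/
def starGraph (t : ℕ) : SimpleGraph (Fin t) := SimpleGraph.fromRel (fun i _ => (i : ℕ) = 0)

section Aux

variable {V : Type}

private lemma exists_adj_of_reachable_ne {G : SimpleGraph V} {v x : V}
    (h : G.Reachable v x) (hne : v ≠ x) : ∃ w, G.Adj v w := by
  obtain ⟨p⟩ := h
  cases p with
  | nil => exact absurd rfl hne
  | cons h _ => exact ⟨_, h⟩

private lemma edgeComp_iff {G : SimpleGraph V} (v : V) :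
    (∃ x y, G.Adj x y ∧ G.connectedComponentMk x = G.connectedComponentMk v) ↔
      ∃ w, G.Adj v w := by
  constructor
  · rintro ⟨x, y, hxy, hx⟩
    by_cases hvx : v = x
    · exact ⟨y, hvx ▸ hxy⟩
    · exact exists_adj_of_reachable_ne (ConnectedComponent.exact hx).symm hvx
  · rintro ⟨w, hw⟩
    exact ⟨v, w, hw, rfl⟩

private lemma reach_split {G : SimpleGraph V} (a b : V) {u v : V}
    (h : G.Reachable u v) :
    (G.deleteEdges {s(a,b)}).Reachable u v ∨
    ((G.deleteEdges {s(a,b)}).Reachable u a ∧ (G.deleteEdges {s(a,b)}).Reachable v b) ∨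
    ((G.deleteEdges {s(a,b)}).Reachable u b ∧ (G.deleteEdges {s(a,b)}).Reachable v a) := by
  obtain ⟨p⟩ := h
  induction p with
  | nil => exact Or.inl (Reachable.refl _)
  | @cons u x v hux p ih =>
    by_cases he : (G.deleteEdges {s(a,b)}).Adj u x
    · rcases ih with h1 | ⟨h1, h2⟩ | ⟨h1, h2⟩
      · exact Or.inl ((Adj.reachable he).trans h1)
      · exact Or.inr (Or.inl ⟨(Adj.reachable he).trans h1, h2⟩)
      · exact Or.inr (Or.inr ⟨(Adj.reachable he).trans h1, h2⟩)
    · have hs : s(u,x) = s(a,b) := by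
        by_contra hs
        exact he ((deleteEdges_adj).mpr ⟨hux, by simpa using hs⟩)
      rw [Sym2.eq_iff] at hs
      rcases hs with ⟨rfl, rfl⟩ | ⟨rfl, rfl⟩
      · rcases ih with h1 | ⟨h1, h2⟩ | ⟨h1, h2⟩
        · exact Or.inr (Or.inl ⟨Reachable.refl _, h1.symm⟩)
        · exact Or.inl (h1.symm.trans h2.symm)
        · exact Or.inl h2.symm
      · rcases ih with h1 | ⟨h1, h2⟩ | ⟨h1, h2⟩
        · exact Or.inr (Or.inr ⟨Reachable.refl _, h1.symm⟩)
        · exact Or.inl h2.symm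
        · exact Or.inl (h1.symm.trans h2.symm)

private lemma ncard_inter_pair {S : Set V} {a b : V} (hne : a ≠ b) :
    (S ∩ {a, b}).ncard = (if a ∈ S then 1 else 0) + (if b ∈ S then 1 else 0) := by
  by_cases ha : a ∈ S <;> by_cases hb : b ∈ S
  · have h1 : S ∩ {a, b} = {a, b} := by
      apply Set.inter_eq_right.mpr
      rintro x (rfl | rfl) <;> assumption
    rw [h1, Set.ncard_pair hne, if_pos ha, if_pos hb]
  · have h1 : S ∩ {a, b} = {a} := by
      ext x
      simp only [Set.mem_inter_iff, Set.mem_insert_iff, Set.mem_singleton_iff]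
      constructor
      · rintro ⟨hx, rfl | rfl⟩
        · rfl
        · exact absurd hx hb
      · rintro rfl; exact ⟨ha, Or.inl rfl⟩
    rw [h1, Set.ncard_singleton, if_pos ha, if_neg hb]
  · have h1 : S ∩ {a, b} = {b} := by
      ext x
      simp only [Set.mem_inter_iff, Set.mem_insert_iff, Set.mem_singleton_iff]
      constructor
      · rintro ⟨hx, rfl | rfl⟩
        · exact absurd hx ha
        · rfl
      · rintro rfl; exact ⟨hb, Or.inr rfl⟩
    rw [h1, Set.ncard_singleton, if_neg ha, if_pos hb]
  · have h1 : S ∩ {a, b} = ∅ := by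
      ext x
      simp only [Set.mem_inter_iff, Set.mem_insert_iff, Set.mem_singleton_iff,
        Set.mem_empty_iff_false, iff_false, not_and]
      rintro hx (rfl | rfl)
      · exact ha hx
      · exact hb hx
    rw [h1, Set.ncard_empty, if_neg ha, if_neg hb]

end Aux

/-- Deleting an edge from a forest does not increase ℓ - 2·comp. -/
theorem deleteEdge_leaves_comps {V : Type} [Fintype V] (F : SimpleGraph V)
    (hF : F.IsAcyclic) (a b : V) (hab : F.Adj a b) :
    (numLeaves (F.deleteEdges {s(a, b)}) : ℤ) - 2 * numEdgeComps (F.deleteEdges {s(a, b)})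
      ≤ (numLeaves F : ℤ) - 2 * numEdgeComps F := by
  classical
  set F' := F.deleteEdges {s(a, b)} with hF'def
  have hne : a ≠ b := hab.ne
  have hnab : ¬ F'.Reachable a b :=
    ((isBridge_iff).mp ((isAcyclic_iff_forall_adj_isBridge.mp hF) hab))
  have hle : F' ≤ F := deleteEdges_le _
  -- neighbor set facts
  have hnbra : F'.neighborSet a = F.neighborSet a \ {b} := by
    ext w
    simp only [mem_neighborSet, hF'def, deleteEdges_adj, Set.mem_diff, Set.mem_singleton_iff]
    exact and_congr_right fun _ => not_congr Sym2.congr_right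
  have hnbrb : F'.neighborSet b = F.neighborSet b \ {a} := by
    ext w
    simp only [mem_neighborSet, hF'def, deleteEdges_adj, Set.mem_diff, Set.mem_singleton_iff]
    refine and_congr_right fun _ => not_congr ?_
    rw [Sym2.eq_iff]
    constructor
    · rintro (⟨h1, h2⟩ | ⟨h1, h2⟩)
      · exact absurd h1 hne.symm
      · exact h2
    · rintro rfl; exact Or.inr ⟨rfl, rfl⟩
  have hnbr_other : ∀ v, v ≠ a → v ≠ b → F'.neighborSet v = F.neighborSet v := by
    intro v hva hvb
    ext w
    simp only [mem_neighborSet, hF'def, deleteEdges_adj, Set.mem_singleton_iff]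
    refine and_iff_left_of_imp fun _ h => ?_
    rw [Sym2.eq_iff] at h
    rcases h with ⟨rfl, rfl⟩ | ⟨rfl, rfl⟩
    · exact hva rfl
    · exact hvb rfl
  have hdeg : ∀ (G : SimpleGraph V) (v : V), deg G v = (G.neighborSet v).ncard := by
    intro G v
    exact (Nat.card_coe_set_eq _).symm
  have hmema : b ∈ F.neighborSet a := hab
  have hmemb : a ∈ F.neighborSet b := hab.symm
  have hdega : deg F' a = deg F a - 1 := by
    rw [hdeg, hdeg, hnbra, Set.ncard_diff_singleton_of_mem hmema]
  have hdegb : deg F' b = deg F b - 1 := by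
    rw [hdeg, hdeg, hnbrb, Set.ncard_diff_singleton_of_mem hmemb]
  have hdeg_other : ∀ v, v ≠ a → v ≠ b → deg F' v = deg F v := by
    intro v hva hvb
    rw [hdeg, hdeg, hnbr_other v hva hvb]
  have hda : 1 ≤ deg F a := by
    rw [hdeg]
    exact (Set.ncard_pos).mpr ⟨b, hmema⟩
  have hdb : 1 ≤ deg F b := by
    rw [hdeg]
    exact (Set.ncard_pos).mpr ⟨a, hmemb⟩
  have hpos : ∀ (G : SimpleGraph V) (v : V), (∃ w, G.Adj v w) ↔ 0 < deg G v := by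
    intro G v
    rw [hdeg, Set.ncard_pos]
    exact ⟨fun ⟨w, hw⟩ => ⟨w, hw⟩, fun ⟨w, hw⟩ => ⟨w, hw⟩⟩
  -- leaves
  set L : Set V := {v | deg F v = 1} with hL
  set L' : Set V := {v | deg F' v = 1} with hL'
  have hnumL : numLeaves F = L.ncard := (Nat.card_coe_set_eq _).symm
  have hnumL' : numLeaves F' = L'.ncard := (Nat.card_coe_set_eq _).symm
  have hLsplit : (L ∩ {a, b}).ncard + (L \ {a, b}).ncard = L.ncard :=
    Set.ncard_inter_add_ncard_diff_eq_ncard L {a, b}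
  have hLsplit' : (L' ∩ {a, b}).ncard + (L' \ {a, b}).ncard = L'.ncard :=
    Set.ncard_inter_add_ncard_diff_eq_ncard L' {a, b}
  have hLdiff : L \ {a, b} = L' \ {a, b} := by
    ext v
    simp only [Set.mem_diff, Set.mem_insert_iff, Set.mem_singleton_iff, hL, hL',
      Set.mem_setOf_eq, not_or]
    constructor
    · rintro ⟨h1, hva, hvb⟩
      exact ⟨by rw [hdeg_other v hva hvb]; exact h1, hva, hvb⟩
    · rintro ⟨h1, hva, hvb⟩
      exact ⟨by rw [← hdeg_other v hva hvb]; exact h1, hva, hvb⟩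
  -- components
  set S : Set F.ConnectedComponent :=
    {c | ∃ v w, F.Adj v w ∧ F.connectedComponentMk v = c} with hS
  set S' : Set F'.ConnectedComponent :=
    {c | ∃ v w, F'.Adj v w ∧ F'.connectedComponentMk v = c} with hS'
  have hnumC : numEdgeComps F = S.ncard := (Nat.card_coe_set_eq _).symm
  have hnumC' : numEdgeComps F' = S'.ncard := (Nat.card_coe_set_eq _).symm
  set θ : F'.ConnectedComponent → F.ConnectedComponent :=
    ConnectedComponent.map (Hom.ofLE hle) with hθ
  have hθmk : ∀ v, θ (F'.connectedComponentMk v) = F.connectedComponentMk v := fun v =>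
    ConnectedComponent.map_mk _ v
  have hmkne : F'.connectedComponentMk a ≠ F'.connectedComponentMk b := by
    intro h
    exact hnab (ConnectedComponent.exact h)
  have hsplit : ∀ u v : V, F.connectedComponentMk u = F.connectedComponentMk v →
      F'.Reachable u v ∨ (F'.Reachable u a ∧ F'.Reachable v b) ∨
        (F'.Reachable u b ∧ F'.Reachable v a) := by
    intro u v h
    exact reach_split a b (ConnectedComponent.exact h)
  have haS : F.connectedComponentMk a ∈ S := ⟨a, b, hab, rfl⟩
  have hScard : (S \ {F.connectedComponentMk a}).ncard + 1 = S.ncard :=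
    Set.ncard_diff_singleton_add_one haS
  set P : Set F'.ConnectedComponent :=
    {F'.connectedComponentMk a, F'.connectedComponentMk b} with hP
  have hbij : Set.BijOn θ (S' \ P) (S \ {F.connectedComponentMk a}) := by
    refine ⟨?_, ?_, ?_⟩
    · rintro c ⟨hcS', hcP⟩
      simp only [hP, Set.mem_insert_iff, Set.mem_singleton_iff, not_or] at hcP
      obtain ⟨u, hu⟩ := c.exists_rep
      replace hu : F'.connectedComponentMk u = c := hu
      obtain ⟨v, w, hvw, hvc⟩ := hcS'
      constructor
      · exact ⟨v, w, hle hvw, by rw [← hθmk v, hvc]⟩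
      · simp only [Set.mem_singleton_iff]
        intro hc
        have h : F.connectedComponentMk u = F.connectedComponentMk a := by
          rw [← hθmk u, hu, hc]
        rcases hsplit u a h with h1 | ⟨h1, _⟩ | ⟨h1, _⟩
        · exact hcP.1 (hu.symm.trans (ConnectedComponent.sound h1))
        · exact hcP.1 (hu.symm.trans (ConnectedComponent.sound h1))
        · exact hcP.2 (hu.symm.trans (ConnectedComponent.sound h1))
    · rintro c ⟨hcS', hcP⟩ d ⟨hdS', hdP⟩ hcd
      simp only [hP, Set.mem_insert_iff, Set.mem_singleton_iff, not_or] at hcP hdP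
      obtain ⟨u, hu⟩ := c.exists_rep
      replace hu : F'.connectedComponentMk u = c := hu
      obtain ⟨v, hv⟩ := d.exists_rep
      replace hv : F'.connectedComponentMk v = d := hv
      have h : F.connectedComponentMk u = F.connectedComponentMk v := by
        rw [← hθmk u, ← hθmk v, hu, hv, hcd]
      rcases hsplit u v h with h1 | ⟨h1, _⟩ | ⟨h1, _⟩
      · rw [← hu, ← hv]; exact ConnectedComponent.sound h1
      · exact absurd (hu.symm.trans (ConnectedComponent.sound h1)) hcP.1
      · exact absurd (hu.symm.trans (ConnectedComponent.sound h1)) hcP.2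
    · rintro d ⟨hdS, hda'⟩
      simp only [Set.mem_singleton_iff] at hda'
      obtain ⟨v, w, hvw, hvd⟩ := hdS
      have hva : v ≠ a := by rintro rfl; exact hda' hvd.symm
      have hvb : v ≠ b := by
        rintro rfl
        exact hda' (hvd.symm.trans (ConnectedComponent.sound hab.symm.reachable))
      have hvw' : F'.Adj v w := by
        rw [hF'def, deleteEdges_adj]
        refine ⟨hvw, ?_⟩
        simp only [Set.mem_singleton_iff, Sym2.eq_iff]
        rintro (⟨rfl, rfl⟩ | ⟨rfl, rfl⟩)
        · exact hva rfl
        · exact hvb rfl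
      refine ⟨F'.connectedComponentMk v, ⟨⟨v, w, hvw', rfl⟩, ?_⟩, by rw [hθmk v]; exact hvd⟩
      simp only [hP, Set.mem_insert_iff, Set.mem_singleton_iff, not_or]
      refine ⟨fun h => hda' ?_, fun h => hda' ?_⟩
      · rw [← hvd, ← hθmk v, h, hθmk a]
      · rw [← hvd, ← hθmk v, h, hθmk b]
        exact ConnectedComponent.sound hab.symm.reachable
  have hcard_mid : (S' \ P).ncard = (S \ {F.connectedComponentMk a}).ncard := by
    rw [← hbij.image_eq, Set.ncard_image_of_injOn hbij.injOn]
  have hS'split : (S' ∩ P).ncard + (S' \ P).ncard = S'.ncard :=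
    Set.ncard_inter_add_ncard_diff_eq_ncard S' P
  have hiffA : (F'.connectedComponentMk a ∈ S') ↔ 0 < deg F a - 1 := by
    rw [hS', Set.mem_setOf_eq, edgeComp_iff, hpos F' a, hdega]
  have hiffB : (F'.connectedComponentMk b ∈ S') ↔ 0 < deg F b - 1 := by
    rw [hS', Set.mem_setOf_eq, edgeComp_iff, hpos F' b, hdegb]
  -- explicit count formulas
  have e1 : numLeaves F
      = ((if a ∈ L then 1 else 0) + (if b ∈ L then 1 else 0)) + (L \ {a, b}).ncard := by
    rw [hnumL, ← hLsplit, ncard_inter_pair hne]; congr!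
  have e2 : numLeaves F'
      = ((if a ∈ L' then 1 else 0) + (if b ∈ L' then 1 else 0)) + (L \ {a, b}).ncard := by
    rw [hnumL', ← hLsplit', ncard_inter_pair hne, ← hLdiff]; congr!
  have e3 : numEdgeComps F = (S \ {F.connectedComponentMk a}).ncard + 1 := by
    rw [hnumC, ← hScard]
  have e4 : numEdgeComps F'
      = ((if F'.connectedComponentMk a ∈ S' then 1 else 0)
          + (if F'.connectedComponentMk b ∈ S' then 1 else 0))
        + (S \ {F.connectedComponentMk a}).ncard := by
    rw [hnumC', ← hS'split, hcard_mid, hP, ncard_inter_pair hmkne]; congr!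
  rw [e1, e2, e3, e4]
  simp only [hiffA, hiffB, hL, hL', Set.mem_setOf_eq, hdega, hdegb]
  split_ifs <;> push_cast <;> omega
end

section
/- Let F be a forest and G a graph, both on n vertices. If 3·Δ(G) + ℓ(F) - 2·comp(F) < n, then F and G pack. -/
open SimpleGraph
open scoped Classical

attribute [-instance] SimpleGraph.instDecidableRelAdjDeleteEdgesOfDecidablePredSym2MemSetOfDecidableEq

section Helpers
set_option linter.unusedSectionVars false

open Finset

variable {V : Type} [Fintype V]

private lemma deg_eq_card (G : SimpleGraph V) (v : V) :
    deg G v = (G.neighborFinset v).card := by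
  rw [deg, neighborFinset_def, Set.toFinset_card, Nat.card_eq_fintype_card]

private lemma deg_le_maxDeg (G : SimpleGraph V) (v : V) : deg G v ≤ maxDeg G :=
  le_csSup (Set.Finite.bddAbove (Set.finite_range _)) (Set.mem_range_self v)

private lemma leaf_nbhd {F : SimpleGraph V} {x y : V} (hxy : F.Adj x y) (hx : deg F x = 1) :
    F.neighborFinset x = {y} := by
  rw [deg_eq_card] at hx
  obtain ⟨a, ha⟩ := Finset.card_eq_one.mp hx
  have hy : y ∈ F.neighborFinset x := by simpa [mem_neighborFinset] using hxy
  rw [ha] at hy ⊢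
  simp_all

private lemma del_adj (F : SimpleGraph V) (x y a b : V) :
    (F.deleteEdges {s(x,y)}).Adj a b ↔ F.Adj a b ∧ s(a,b) ≠ s(x,y) := by
  simp [deleteEdges_adj]

private lemma del_acyclic {F : SimpleGraph V} (hF : F.IsAcyclic) (s : Set (Sym2 V)) :
    (F.deleteEdges s).IsAcyclic :=
  fun _v c hc => hF (c.mapLe (deleteEdges_le s)) (hc.mapLe _)

private lemma del_nbhd_x {F : SimpleGraph V} {x y : V} (hxy : F.Adj x y) (hx : deg F x = 1) :
    (F.deleteEdges {s(x,y)}).neighborFinset x = ∅ := by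
  ext z
  simp only [mem_neighborFinset, del_adj, Finset.notMem_empty, iff_false]
  rintro ⟨hadj, hne⟩
  have : z ∈ F.neighborFinset x := by simpa [mem_neighborFinset] using hadj
  rw [leaf_nbhd hxy hx] at this
  simp only [Finset.mem_singleton] at this
  subst this
  exact hne rfl

private lemma del_nbhd_y {F : SimpleGraph V} {x y : V} (hxy : F.Adj x y) :
    (F.deleteEdges {s(x,y)}).neighborFinset y = (F.neighborFinset y).erase x := by
  ext z
  simp only [mem_neighborFinset, del_adj, Finset.mem_erase]
  constructor
  · rintro ⟨hadj, hne⟩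
    refine ⟨fun hzx => hne ?_, hadj⟩
    subst hzx
    rw [Sym2.eq_swap]
  · rintro ⟨hzx, hadj⟩
    refine ⟨hadj, fun he => ?_⟩
    rcases Sym2.eq_iff.mp he with ⟨h1, _⟩ | ⟨_, h2⟩
    · exact hxy.ne h1.symm
    · exact hzx h2

private lemma del_nbhd_other {F : SimpleGraph V} {x y v : V} (hvx : v ≠ x) (hvy : v ≠ y) :
    (F.deleteEdges {s(x,y)}).neighborFinset v = F.neighborFinset v := by
  ext z
  simp only [mem_neighborFinset, del_adj, and_iff_left_iff_imp]
  intro _ he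
  rcases Sym2.eq_iff.mp he with ⟨h1, _⟩ | ⟨h2, _⟩
  · exact hvx h1
  · exact hvy h2

private lemma del_nbhd_subset {F : SimpleGraph V} {x y : V} (v : V) :
    (F.deleteEdges {s(x,y)}).neighborFinset v ⊆ F.neighborFinset v := by
  intro z
  simp only [mem_neighborFinset, del_adj]
  exact fun h => h.1

private lemma del_card_edge {F : SimpleGraph V} {x y : V} (hxy : F.Adj x y) :
    (F.deleteEdges {s(x,y)}).edgeFinset.card = F.edgeFinset.card - 1 := by
  have he : (F.deleteEdges {s(x,y)}).edgeFinset = F.edgeFinset.erase s(x,y) := by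
    ext e
    simp only [mem_edgeFinset, edgeSet_deleteEdges, Set.mem_diff, Set.mem_singleton_iff,
      Finset.mem_erase, mem_edgeFinset]
    tauto
  rw [he, Finset.card_erase_of_mem (by simpa [mem_edgeFinset] using hxy)]

private lemma exists_adj_of_card {F : SimpleGraph V} {k : ℕ} (h : F.edgeFinset.card = k + 1) :
    ∃ a b : V, F.Adj a b := by
  have hpos : 0 < F.edgeFinset.card := by omega
  obtain ⟨e, he⟩ := Finset.card_pos.mp hpos
  induction e using Sym2.ind with
  | _ a b => exact ⟨a, b, by simpa [mem_edgeFinset] using he⟩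

end Helpers

section Helpers2
set_option linter.unusedSectionVars false
open Finset

variable {V : Type} [Fintype V]

private lemma exists_leaf {F : SimpleGraph V} (hF : F.IsAcyclic) (hne : ∃ a b : V, F.Adj a b) :
    ∃ x y : V, F.Adj x y ∧ deg F x = 1 := by
  obtain ⟨a, b, hab⟩ := hne
  set L : Set ℕ := {l | ∃ (u : V) (v : V) (p : F.Walk u v), p.IsPath ∧ p.length = l} with hL
  have hbdd : BddAbove L := by
    refine ⟨Fintype.card V, ?_⟩
    rintro l ⟨u, v, p, hp, rfl⟩
    exact le_of_lt hp.length_lt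
  have h1L : (1 : ℕ) ∈ L := by
    refine ⟨a, b, Walk.cons hab Walk.nil, ?_, by simp⟩
    rw [Walk.cons_isPath_iff]
    exact ⟨Walk.IsPath.nil, by simp [hab.ne]⟩
  have hM : sSup L ∈ L := Nat.sSup_mem ⟨1, h1L⟩ hbdd
  set M := sSup L with hMdef
  have h1M : 1 ≤ M := le_csSup hbdd h1L
  obtain ⟨u, v, p, hp, hlen⟩ := hM
  have hp2 : p.reverse.IsPath := hp.reverse
  have hlen2 : p.reverse.length = M := by simpa using hlen
  have hnotnil : ¬ p.reverse.Nil := by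
    rw [Walk.nil_iff_length_eq, hlen2]
    omega
  obtain ⟨w, hvw, r, hr⟩ := Walk.not_nil_iff.mp hnotnil
  rw [hr, Walk.cons_isPath_iff] at hp2
  obtain ⟨hrpath, hvns⟩ := hp2
  refine ⟨v, w, hvw, ?_⟩
  have hsub : F.neighborFinset v ⊆ {w} := by
    intro z hz
    rw [mem_neighborFinset] at hz
    simp only [Finset.mem_singleton]
    by_contra hzw
    by_cases hzs : z ∈ r.support
    · -- z on the path: produces a cycle
      have ht : (r.takeUntil z hzs).IsPath := hrpath.takeUntil hzs
      have hvt : v ∉ (r.takeUntil z hzs).support :=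
        fun hmem => hvns (Walk.support_takeUntil_subset _ _ hmem)
      have hPpath : (Walk.cons hvw (r.takeUntil z hzs)).IsPath :=
        (Walk.cons_isPath_iff _ _).mpr ⟨ht, hvt⟩
      have hedge : ¬ s(z,v) ∈ (Walk.cons hvw (r.takeUntil z hzs)).edges := by
        intro hmem
        rw [Walk.edges_cons] at hmem
        rcases List.mem_cons.mp hmem with heq | hmem2
        · rcases Sym2.eq_iff.mp heq with ⟨h1, _⟩ | ⟨h1, _⟩
          · exact hz.ne' h1
          · exact hzw h1
        · exact hvt (Walk.snd_mem_support_of_mem_edges _ hmem2)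
      exact hF _ (SimpleGraph.Path.cons_isCycle ⟨_, hPpath⟩ hz.symm hedge)
    · -- z off the path: extend, contradicting maximality
      have hzsup : z ∉ p.reverse.support := by
        rw [hr, Walk.support_cons]
        intro hmem
        rcases List.mem_cons.mp hmem with heq | hmem2
        · exact hz.ne' heq
        · exact hzs hmem2
      have hext : (Walk.cons hz.symm p.reverse).IsPath :=
        (Walk.cons_isPath_iff _ _).mpr ⟨hp.reverse, hzsup⟩
      have hmemL : (M + 1 : ℕ) ∈ L :=
        ⟨z, u, Walk.cons hz.symm p.reverse, hext, by simp [hlen2]⟩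
      have := le_csSup hbdd hmemL
      omega
  have hw : w ∈ F.neighborFinset v := (mem_neighborFinset _ _ _).mpr hvw
  rw [deg_eq_card]
  rcases Finset.subset_singleton_iff.mp hsub with hemp | hsing
  · rw [hemp] at hw; simp at hw
  · rw [hsing]; simp

private lemma comps_mono {F F' : SimpleGraph V} (hle : F' ≤ F)
    (hex : ∀ c : F.ConnectedComponent, (∃ v w, F.Adj v w ∧ F.connectedComponentMk v = c) →
      ∃ v w, F'.Adj v w ∧ F.connectedComponentMk v = c) :
    numEdgeComps F ≤ numEdgeComps F' := by
  have hchoice : ∀ C : {c : F.ConnectedComponent // ∃ v w, F.Adj v w ∧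
      F.connectedComponentMk v = c},
      ∃ v w, F'.Adj v w ∧ F.connectedComponentMk v = C.1 := fun C => hex C.1 C.2
  choose v w hadj hmk using hchoice
  refine Nat.card_le_card_of_injective
    (f := fun C => (⟨F'.connectedComponentMk (v C), v C, w C, hadj C, rfl⟩ :
      {c : F'.ConnectedComponent // ∃ a b, F'.Adj a b ∧ F'.connectedComponentMk a = c})) ?_
  intro C1 C2 h12
  have h12' : F'.connectedComponentMk (v C1) = F'.connectedComponentMk (v C2) :=
    congrArg Subtype.val h12
  have hreach : F.Reachable (v C1) (v C2) := (ConnectedComponent.exact h12').mono hle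
  exact Subtype.ext ((hmk C1).symm.trans ((ConnectedComponent.sound hreach).trans (hmk C2)))

private lemma comps_del_le {F : SimpleGraph V} {x y z : V} (hxy : F.Adj x y)
    (hyz : F.Adj y z) (hzx : z ≠ x) :
    numEdgeComps F ≤ numEdgeComps (F.deleteEdges {s(x,y)}) := by
  apply comps_mono (deleteEdges_le _)
  rintro c ⟨v, w, hvw, rfl⟩
  by_cases he : s(v,w) = s(x,y)
  · refine ⟨y, z, ?_, ?_⟩
    · rw [del_adj]
      refine ⟨hyz, fun h => ?_⟩
      rcases Sym2.eq_iff.mp h with ⟨h1, _⟩ | ⟨_, h2⟩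
      · exact hxy.ne h1.symm
      · exact hzx h2
    · rcases Sym2.eq_iff.mp he with ⟨rfl, rfl⟩ | ⟨rfl, rfl⟩
      · exact (ConnectedComponent.connectedComponentMk_eq_of_adj hxy).symm
      · rfl
  · exact ⟨v, w, (del_adj F x y v w).mpr ⟨hvw, he⟩, rfl⟩

private lemma comps_del_le' {F : SimpleGraph V} {x y : V} (hxy : F.Adj x y) :
    numEdgeComps F ≤ numEdgeComps (F.deleteEdges {s(x,y)}) + 1 := by
  classical
  set F' := F.deleteEdges {s(x,y)} with hF'
  have hchoice : ∀ C : {c : F.ConnectedComponent // ∃ v w, F.Adj v w ∧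
      F.connectedComponentMk v = c}, C.1 ≠ F.connectedComponentMk x →
      ∃ v w, F'.Adj v w ∧ F.connectedComponentMk v = C.1 := by
    rintro ⟨c, v, w, hvw, rfl⟩ hne
    by_cases he : s(v,w) = s(x,y)
    · exfalso
      apply hne
      rcases Sym2.eq_iff.mp he with ⟨rfl, rfl⟩ | ⟨rfl, rfl⟩
      · rfl
      · exact (ConnectedComponent.connectedComponentMk_eq_of_adj hxy).symm
    · exact ⟨v, w, (del_adj F x y v w).mpr ⟨hvw, he⟩, rfl⟩
  have key : numEdgeComps F ≤ Nat.card (Option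
      {c : F'.ConnectedComponent // ∃ a b, F'.Adj a b ∧ F'.connectedComponentMk a = c}) := by
    refine Nat.card_le_card_of_injective (f := fun C =>
      if h : C.1 = F.connectedComponentMk x then none else
        some ⟨F'.connectedComponentMk (hchoice C h).choose,
          (hchoice C h).choose, (hchoice C h).choose_spec.choose,
          (hchoice C h).choose_spec.choose_spec.1, rfl⟩) ?_
    intro C1 C2 h12
    dsimp only at h12
    by_cases h1 : C1.1 = F.connectedComponentMk x
    · by_cases h2 : C2.1 = F.connectedComponentMk x
      · exact Subtype.ext (h1.trans h2.symm)
      · rw [dif_pos h1, dif_neg h2] at h12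
        exact absurd h12.symm (Option.some_ne_none _)
    · by_cases h2 : C2.1 = F.connectedComponentMk x
      · rw [dif_neg h1, dif_pos h2] at h12
        exact absurd h12 (Option.some_ne_none _)
      · rw [dif_neg h1, dif_neg h2] at h12
        have h12' : F'.connectedComponentMk (hchoice C1 h1).choose =
            F'.connectedComponentMk (hchoice C2 h2).choose :=
          congrArg Subtype.val (Option.some.inj h12)
        have hreach : F.Reachable (hchoice C1 h1).choose (hchoice C2 h2).choose :=
          (ConnectedComponent.exact h12').mono (deleteEdges_le _)
        have e1 := (hchoice C1 h1).choose_spec.choose_spec.2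
        have e2 := (hchoice C2 h2).choose_spec.choose_spec.2
        exact Subtype.ext (e1.symm.trans ((ConnectedComponent.sound hreach).trans e2))
  rw [Finite.card_option] at key
  exact key

end Helpers2

section Helpers3
set_option linter.unusedSectionVars false
open Finset

variable {V : Type} [Fintype V]

private lemma no_adj_of_card_zero {F : SimpleGraph V} (h : F.edgeFinset.card = 0) :
    ∀ a b : V, ¬ F.Adj a b := by
  intro a b hab
  have : s(a,b) ∈ F.edgeFinset := by simpa [mem_edgeFinset] using hab
  rw [Finset.card_eq_zero.mp h] at this
  exact absurd this (Finset.notMem_empty _)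

private lemma numEdgeComps_eq_zero {F : SimpleGraph V} (h : ∀ a b : V, ¬ F.Adj a b) :
    numEdgeComps F = 0 := by
  have : IsEmpty {c : F.ConnectedComponent // ∃ v w : V, F.Adj v w ∧
      F.connectedComponentMk v = c} := ⟨fun C => by
    obtain ⟨_, v, w, hvw, _⟩ := C
    exact h v w hvw⟩
  exact Nat.card_of_isEmpty

private lemma forest_euler : ∀ (k : ℕ) (F : SimpleGraph V), F.edgeFinset.card = k →
    F.IsAcyclic →
    k + numEdgeComps F + (univ.filter fun v => deg F v = 0).card ≤ Fintype.card V := by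
  intro k
  induction k with
  | zero =>
    intro F hcard _
    have hno := no_adj_of_card_zero hcard
    rw [numEdgeComps_eq_zero hno]
    have : (univ.filter fun v => deg F v = 0) ⊆ univ := Finset.filter_subset _ _
    have := Finset.card_le_card this
    simpa using this
  | succ k ih =>
    intro F hcard hF
    obtain ⟨x, y, hxy, hx⟩ := exists_leaf hF (exists_adj_of_card hcard)
    set F' := F.deleteEdges {s(x,y)} with hF'def
    have hcard' : F'.edgeFinset.card = k := by
      rw [hF'def, del_card_edge hxy, hcard]
      omega
    have IH := ih F' hcard' (del_acyclic hF _)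
    -- x and y are not isolated in F
    have hxne : deg F x ≠ 0 := by rw [hx]; omega
    have hyne : deg F y ≠ 0 := by
      rw [deg_eq_card]
      intro h0
      have : x ∈ F.neighborFinset y := (mem_neighborFinset _ _ _).mpr hxy.symm
      rw [Finset.card_eq_zero.mp h0] at this
      exact absurd this (Finset.notMem_empty _)
    -- isolated vertices of F are isolated in F'
    have hiso : ∀ v, deg F v = 0 → deg F' v = 0 := by
      intro v hv
      have hvx : v ≠ x := fun h => hxne (h ▸ hv)
      have hvy : v ≠ y := fun h => hyne (h ▸ hv)
      rw [deg_eq_card, hF'def, del_nbhd_other hvx hvy, ← deg_eq_card]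
      exact hv
    have hx0 : deg F' x = 0 := by
      rw [deg_eq_card, hF'def, del_nbhd_x hxy hx]
      simp
    by_cases hy1 : deg F y = 1
    · -- K2 component case
      have hy0 : deg F' y = 0 := by
        rw [deg_eq_card, hF'def, del_nbhd_y hxy, leaf_nbhd hxy.symm hy1]
        simp
      have hsub : insert y (insert x (univ.filter fun v => deg F v = 0)) ⊆
          (univ.filter fun v => deg F' v = 0) := by
        intro v hv
        simp only [Finset.mem_insert, Finset.mem_filter, Finset.mem_univ, true_and] at hv ⊢
        rcases hv with rfl | rfl | hv
        · exact hy0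
        · exact hx0
        · exact hiso v hv
      have hcard2 : (univ.filter fun v => deg F v = 0).card + 2 ≤
          (univ.filter fun v => deg F' v = 0).card := by
        have h1 : x ∉ (univ.filter fun v => deg F v = 0) := by
          simp [hxne]
        have h2 : y ∉ insert x (univ.filter fun v => deg F v = 0) := by
          simp only [Finset.mem_insert, Finset.mem_filter, Finset.mem_univ, true_and]
          push_neg
          exact ⟨hxy.ne', hyne⟩
        calc (univ.filter fun v => deg F v = 0).card + 2
            = (insert y (insert x (univ.filter fun v => deg F v = 0))).card := by
              rw [Finset.card_insert_of_notMem h2, Finset.card_insert_of_notMem h1]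
          _ ≤ _ := Finset.card_le_card hsub
      have hcomp : numEdgeComps F ≤ numEdgeComps F' + 1 := comps_del_le' hxy
      omega
    · -- y has another neighbor z
      have hz : ∃ z, F.Adj y z ∧ z ≠ x := by
        have hmem : x ∈ F.neighborFinset y := (mem_neighborFinset _ _ _).mpr hxy.symm
        have hcge : 2 ≤ (F.neighborFinset y).card := by
          rw [← deg_eq_card]
          rcases Nat.lt_or_ge (deg F y) 2 with h | h
          · interval_cases hdy : deg F y <;> simp_all
          · exact h
        have : 0 < ((F.neighborFinset y).erase x).card := by
          rw [Finset.card_erase_of_mem hmem]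
          omega
        obtain ⟨z, hz⟩ := Finset.card_pos.mp this
        rw [Finset.mem_erase, mem_neighborFinset] at hz
        exact ⟨z, hz.2, hz.1⟩
      obtain ⟨z, hyz, hzx⟩ := hz
      have hcomp : numEdgeComps F ≤ numEdgeComps F' := comps_del_le hxy hyz hzx
      have hsub : insert x (univ.filter fun v => deg F v = 0) ⊆
          (univ.filter fun v => deg F' v = 0) := by
        intro v hv
        simp only [Finset.mem_insert, Finset.mem_filter, Finset.mem_univ, true_and] at hv ⊢
        rcases hv with rfl | hv
        · exact hx0
        · exact hiso v hv
      have hcard2 : (univ.filter fun v => deg F v = 0).card + 1 ≤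
          (univ.filter fun v => deg F' v = 0).card := by
        have h1 : x ∉ (univ.filter fun v => deg F v = 0) := by simp [hxne]
        calc (univ.filter fun v => deg F v = 0).card + 1
            = (insert x (univ.filter fun v => deg F v = 0)).card :=
              (Finset.card_insert_of_notMem h1).symm
          _ ≤ _ := Finset.card_le_card hsub
      omega

end Helpers3

section Helpers4
set_option linter.unusedSectionVars false
open Finset

variable {V : Type} [Fintype V]

private lemma packs_of_sum (G : SimpleGraph V) :
    ∀ (k : ℕ) (F : SimpleGraph V), F.edgeFinset.card = k → F.IsAcyclic →
    3 * maxDeg G + (∑ v, (deg F v - 2)) < Fintype.card V → Packs G F := by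
  intro k
  induction k with
  | zero =>
    intro F hcard _ _
    exact ⟨Equiv.refl V, fun a b hab => absurd hab (no_adj_of_card_zero hcard a b)⟩
  | succ k ih =>
    intro F hcard hF hlt
    obtain ⟨x, y, hxy, hx⟩ := exists_leaf hF (exists_adj_of_card hcard)
    set F' := F.deleteEdges {s(x,y)} with hF'def
    have hcard' : F'.edgeFinset.card = k := by
      rw [hF'def, del_card_edge hxy, hcard]
      omega
    have hdegle : ∀ v, deg F' v ≤ deg F v := fun v => by
      rw [deg_eq_card, deg_eq_card]
      exact Finset.card_le_card (del_nbhd_subset v)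
    have hsumle : (∑ v, (deg F' v - 2)) ≤ ∑ v, (deg F v - 2) :=
      Finset.sum_le_sum fun v _ => Nat.sub_le_sub_right (hdegle v) 2
    obtain ⟨f, hf⟩ := ih F' hcard' (del_acyclic hF _) (by omega)
    have hxiso : ∀ b, ¬ F'.Adj x b := by
      intro b hb
      rw [hF'def, del_adj] at hb
      have hmem : b ∈ F.neighborFinset x := (mem_neighborFinset _ _ _).mpr hb.1
      rw [leaf_nbhd hxy hx, Finset.mem_singleton] at hmem
      exact hb.2 (by rw [hmem])
    have hFadj : ∀ a b, F.Adj a b → F'.Adj a b ∨ (a = x ∧ b = y) ∨ (a = y ∧ b = x) := by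
      intro a b hab
      by_cases he : s(a,b) = s(x,y)
      · right; exact Sym2.eq_iff.mp he
      · left; rw [hF'def, del_adj]; exact ⟨hab, he⟩
    by_cases hc : G.Adj (f x) (f y)
    case neg =>
      refine ⟨f, fun a b hab => ?_⟩
      rcases hFadj a b hab with h | ⟨rfl, rfl⟩ | ⟨rfl, rfl⟩
      · exact hf a b h
      · exact hc
      · exact fun h => hc h.symm
    case pos =>
      set D := maxDeg G with hD
      set T := ∑ v, (deg F v - 2) with hT
      set S := G.neighborFinset (f x) with hS
      set A := (G.neighborFinset (f y)).image (fun p => f.symm p) with hAdef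
      set B := S.biUnion (fun p => F'.neighborFinset (f.symm p)) with hBdef
      set bad := A ∪ B ∪ {y} with hbad
      have hA : A.card ≤ D := by
        calc A.card ≤ (G.neighborFinset (f y)).card := Finset.card_image_le
          _ = deg G (f y) := (deg_eq_card G (f y)).symm
          _ ≤ D := deg_le_maxDeg G (f y)
      have hfyS : f y ∈ S := by rw [hS, mem_neighborFinset]; exact hc
      have hkey : (∑ p ∈ S, (F'.neighborFinset (f.symm p)).card) + 1 ≤ 2 * D + T := by
        have hdy : deg F' y + 1 = deg F y := by
          have hxm : x ∈ F.neighborFinset y := (mem_neighborFinset _ _ _).mpr hxy.symm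
          have hpos : 0 < (F.neighborFinset y).card := Finset.card_pos.mpr ⟨x, hxm⟩
          rw [deg_eq_card, deg_eq_card, hF'def, del_nbhd_y hxy, Finset.card_erase_of_mem hxm]
          omega
        have eq0 : ∑ p ∈ S, (F'.neighborFinset (f.symm p)).card
            = ∑ p ∈ S, deg F' (f.symm p) :=
          Finset.sum_congr rfl fun p _ => (deg_eq_card _ _).symm
        have e1 : ∑ p ∈ S, deg F' (f.symm p)
            = ∑ p ∈ S.erase (f y), deg F' (f.symm p) + deg F' y := by
          have h := (Finset.sum_erase_add S (fun p => deg F' (f.symm p)) hfyS).symm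
          try dsimp only at h
          rwa [Equiv.symm_apply_apply] at h
        have e2 : ∑ p ∈ S.erase (f y), deg F' (f.symm p)
            ≤ ∑ p ∈ S.erase (f y), deg F (f.symm p) :=
          Finset.sum_le_sum fun p _ => hdegle _
        have e3 : ∑ p ∈ S.erase (f y), deg F (f.symm p) + deg F y
            = ∑ p ∈ S, deg F (f.symm p) := by
          have h := Finset.sum_erase_add S (fun p => deg F (f.symm p)) hfyS
          try dsimp only at h
          rwa [Equiv.symm_apply_apply] at h
        have e4 : ∑ p ∈ S, deg F (f.symm p)
            ≤ 2 * S.card + ∑ p ∈ S, (deg F (f.symm p) - 2) := by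
          calc ∑ p ∈ S, deg F (f.symm p) ≤ ∑ p ∈ S, (2 + (deg F (f.symm p) - 2)) :=
                Finset.sum_le_sum fun p _ => by omega
            _ = 2 * S.card + ∑ p ∈ S, (deg F (f.symm p) - 2) := by
                rw [Finset.sum_add_distrib, Finset.sum_const, smul_eq_mul, Nat.mul_comm]
        have e5 : ∑ p ∈ S, (deg F (f.symm p) - 2) ≤ T := by
          rw [hT]
          have himg : ∑ v ∈ S.image (fun p => f.symm p), (deg F v - 2)
              = ∑ p ∈ S, (deg F (f.symm p) - 2) :=
            Finset.sum_image (fun a _ b _ h => f.symm.injective h)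
          rw [← himg]
          exact Finset.sum_le_sum_of_subset (Finset.subset_univ _)
        have e7 : S.card ≤ D := by
          rw [hS, ← deg_eq_card]
          exact deg_le_maxDeg G (f x)
        omega
      have hbadcard : bad.card < Fintype.card V := by
        have h1 : bad.card ≤ (A ∪ B).card + ({y} : Finset V).card := Finset.card_union_le _ _
        have h1' : (A ∪ B).card ≤ A.card + B.card := Finset.card_union_le _ _
        have h2 : B.card ≤ ∑ p ∈ S, (F'.neighborFinset (f.symm p)).card :=
          Finset.card_biUnion_le
        have h3 : ({y} : Finset V).card = 1 := Finset.card_singleton y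
        omega
      obtain ⟨u, hu⟩ : ∃ u, u ∉ bad := by
        by_contra hcon
        push_neg at hcon
        have heq : bad = univ := Finset.eq_univ_iff_forall.mpr hcon
        rw [heq, Finset.card_univ] at hbadcard
        omega
      rw [hbad] at hu
      have hu1 : u ∉ A := fun h => hu (Finset.mem_union_left _ (Finset.mem_union_left _ h))
      have hu2 : u ∉ B := fun h => hu (Finset.mem_union_left _ (Finset.mem_union_right _ h))
      have hu3 : u ≠ y := fun h => hu (Finset.mem_union_right _ (by simp [h]))
      have haA : ¬ G.Adj (f y) (f u) := fun h => hu1 (Finset.mem_image.mpr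
        ⟨f u, (mem_neighborFinset _ _ _).mpr h, Equiv.symm_apply_apply f u⟩)
      have hbB : ∀ z, F'.Adj z u → ¬ G.Adj (f x) (f z) := by
        intro z hzu hGz
        apply hu2
        apply Finset.mem_biUnion.mpr
        refine ⟨f z, ?_, ?_⟩
        · rw [hS, mem_neighborFinset]; exact hGz
        · rw [Equiv.symm_apply_apply, mem_neighborFinset]; exact hzu
      have hux : u ≠ x := fun h => haA (by rw [h]; exact hc.symm)
      set g : V ≃ V := (Equiv.swap x u).trans f with hg
      have hgx : g x = f u := by simp [hg, Equiv.trans_apply, Equiv.swap_apply_left]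
      have hgu : g u = f x := by simp [hg, Equiv.trans_apply, Equiv.swap_apply_right]
      have hgo : ∀ v, v ≠ x → v ≠ u → g v = f v := fun v h1 h2 => by
        simp [hg, Equiv.trans_apply, Equiv.swap_apply_of_ne_of_ne h1 h2]
      refine ⟨g, fun a b hab => ?_⟩
      rcases hFadj a b hab with h | ⟨ha, hb⟩ | ⟨ha, hb⟩
      · by_cases hax : a = x
        · exact absurd (hax ▸ h) (hxiso b)
        · by_cases hbx : b = x
          · exact absurd (hbx ▸ h.symm) (hxiso a)
          · by_cases hau : a = u
            · subst hau
              rw [hgu, hgo b hbx (Ne.symm h.ne)]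
              exact hbB b h.symm
            · by_cases hbu : b = u
              · subst hbu
                rw [hgo a hax hau, hgu]
                intro hGa
                exact hbB a h hGa.symm
              · rw [hgo a hax hau, hgo b hbx hbu]
                exact hf a b h
      · rw [ha, hb, hgx, hgo y hxy.ne' (Ne.symm hu3)]
        intro hG
        exact haA hG.symm
      · rw [ha, hb, hgo y hxy.ne' (Ne.symm hu3), hgx]
        exact haA
end Helpers4

section Glue
set_option linter.unusedSectionVars false
open Finset

variable {V : Type} [Fintype V]

private lemma numLeaves_eq (F : SimpleGraph V) :
    numLeaves F = (univ.filter fun v => deg F v = 1).card := by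
  rw [numLeaves, Nat.card_eq_fintype_card, Fintype.card_subtype]

private lemma sum_deg_eq (F : SimpleGraph V) :
    ∑ v, deg F v = 2 * F.edgeFinset.card := by
  have h : ∀ v, deg F v = F.degree v := fun v => by
    rw [deg_eq_card, card_neighborFinset_eq_degree]
  simp_rw [h]
  exact F.sum_degrees_eq_twice_card_edges

private lemma key_ineq {F : SimpleGraph V} (hF : F.IsAcyclic) :
    ((∑ v, (deg F v - 2) : ℕ) : ℤ) + 2 * (numEdgeComps F : ℤ) ≤ (numLeaves F : ℤ) := by
  have heuler0 := forest_euler F.edgeFinset.card F rfl hF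
  set n := Fintype.card V with hn
  set e := F.edgeFinset.card with he
  set s0 := (univ.filter fun v => deg F v = 0).card with hs0
  set l1 := (univ.filter fun v => deg F v = 1).card with hl1
  have h2 : ∀ v : V, ((deg F v - 2 : ℕ) : ℤ) = ((deg F v : ℤ) - 2)
      + ((if deg F v = 0 then (2:ℤ) else 0) + (if deg F v = 1 then (1:ℤ) else 0)) := by
    intro v
    by_cases h0 : deg F v = 0
    · rw [if_pos h0, if_neg (by omega), h0]
      norm_num
    · by_cases h1v : deg F v = 1
      · rw [if_neg h0, if_pos h1v, h1v]
        norm_num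
      · rw [if_neg h0, if_neg h1v]
        omega
  have h3 : ∑ v, ((deg F v - 2 : ℕ) : ℤ)
      = ∑ v, ((deg F v : ℤ) - 2) + (∑ v, (if deg F v = 0 then (2:ℤ) else 0)
        + ∑ v, (if deg F v = 1 then (1:ℤ) else 0)) := by
    rw [← Finset.sum_add_distrib, ← Finset.sum_add_distrib]
    exact Finset.sum_congr rfl fun v _ => h2 v
  have hsA : ∑ v, ((deg F v : ℤ) - 2) = 2 * (e : ℤ) - 2 * (n : ℤ) := by
    rw [Finset.sum_sub_distrib]
    have hA1 : ∑ v, ((deg F v : ℤ)) = ((∑ v, deg F v : ℕ) : ℤ) := by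
      rw [Nat.cast_sum]
    rw [hA1, sum_deg_eq F, ← he]
    simp only [Finset.sum_const, Finset.card_univ, smul_eq_mul, mul_one, ← hn]
    push_cast
    ring
  have hsB : ∑ v, (if deg F v = 0 then (2:ℤ) else 0) = 2 * (s0 : ℤ) := by
    rw [← Finset.sum_filter, Finset.sum_const, ← hs0]
    simp [mul_comm]
  have hsC : ∑ v, (if deg F v = 1 then (1:ℤ) else 0) = (l1 : ℤ) := by
    rw [← Finset.sum_filter, Finset.sum_const, ← hl1]
    simp
  have hT : ((∑ v, (deg F v - 2) : ℕ) : ℤ)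
      = 2 * (e : ℤ) - 2 * (n : ℤ) + (2 * (s0 : ℤ) + (l1 : ℤ)) := by
    rw [Nat.cast_sum, h3, hsA, hsB, hsC]
  have hlv : (numLeaves F : ℤ) = (l1 : ℤ) := by rw [numLeaves_eq F, ← hl1]
  have heuler : (e : ℤ) + (numEdgeComps F : ℤ) + (s0 : ℤ) ≤ (n : ℤ) := by
    exact_mod_cast heuler0
  rw [hT, hlv]
  linarith

end Glue

/-- If F is a forest and G a graph on n vertices with
3Δ(G) + ℓ(F) - 2comp(F) < n, then F and G pack. -/
theorem forest_packing {V : Type} [Fintype V] {n : ℕ} (hV : Fintype.card V = n)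
    (F G : SimpleGraph V) (hF : F.IsAcyclic)
    (h : 3 * (maxDeg G : ℤ) + numLeaves F - 2 * numEdgeComps F < n) :
    Packs G F := by
  subst hV
  have hkey := key_ineq (F := F) hF
  have h2 : 3 * maxDeg G + (∑ v, (deg F v - 2)) < Fintype.card V := by
    have h3 : (3 * (maxDeg G : ℤ) + ((∑ v, (deg F v - 2) : ℕ) : ℤ)) < (Fintype.card V : ℤ) := by
      linarith
    exact_mod_cast h3
  exact packs_of_sum G F.edgeFinset.card F rfl hF h2
end

section
/- For any ε > 0 and any positive integer r, there exist a graph G with Δ(G) = r and a tree T, both on n vertices for some n, such that 3·Δ(G) + ℓ(T) - 2 < (1+ε)·n but G and T do not pack. -/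
open SimpleGraph
open scoped Classical

lemma isolated_not_reachable {V : Type} {G : SimpleGraph V} {v w : V}
    (h : ∀ z, ¬ G.Adj v z) (hvw : v ≠ w) : ¬ G.Reachable v w := by
  rintro ⟨p⟩
  cases p with
  | nil => exact hvw rfl
  | cons h' _ => exact h _ h'

lemma star_adj {n : ℕ} [NeZero n] (i j : Fin n) :
    (_root_.starGraph n).Adj i j ↔ i ≠ j ∧ (i = 0 ∨ j = 0) := by
  have h : ∀ k : Fin n, (k : ℕ) = 0 ↔ k = 0 := by
    intro k
    constructor
    · intro hk; exact Fin.ext (by simpa using hk)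
    · rintro rfl; simp
  simp [_root_.starGraph, SimpleGraph.fromRel_adj, h]

lemma star_bridge {n : ℕ} [NeZero n] {y : Fin n} (hy : y ≠ 0) :
    ¬ (_root_.starGraph n \ fromEdgeSet {s(0, y)}).Reachable 0 y := by
  intro hre
  refine isolated_not_reachable (v := y) ?_ hy hre.symm
  intro z hz
  have hadj := hz.1
  have hdel := hz.2
  have hz0 : z = 0 := by
    rcases (star_adj y z).1 hadj with ⟨hyz, h0 | h0⟩
    · exact absurd h0 hy
    · exact h0
  subst hz0
  apply hdel
  rw [fromEdgeSet_adj]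
  exact ⟨by simp [Sym2.eq_swap], hy⟩

lemma star_tree {n : ℕ} (hn : 2 ≤ n) : (_root_.starGraph n).IsTree := by
  haveI : NeZero n := ⟨by omega⟩
  constructor
  · rw [connected_iff]
    refine ⟨fun i j => ?_, ⟨0⟩⟩
    have h0 : ∀ k : Fin n, (_root_.starGraph n).Reachable k 0 := by
      intro k
      by_cases hk : k = 0
      · exact hk ▸ Reachable.refl _
      · exact ((star_adj k 0).2 ⟨hk, Or.inr rfl⟩).reachable
    exact (h0 i).trans (h0 j).symm
  · rw [isAcyclic_iff_forall_adj_isBridge]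
    intro v w hvw
    rw [isBridge_iff]
    rcases (star_adj v w).1 hvw with ⟨hne, h0 | h0⟩
    · subst h0
      exact star_bridge (Ne.symm hne)
    · subst h0
      intro hre
      have : s(v, (0 : Fin n)) = s(0, v) := Sym2.eq_swap
      rw [this] at hre
      exact star_bridge hne hre.symm

/-- Asymptotic tightness: for any ε > 0 and r ≥ 1 there are G with Δ(G) = r and a tree T
on n vertices with 3Δ(G) + ℓ(T) - 2 < (1+ε)n, but G and T do not pack. -/
theorem asymptotic_tightness (ε : ℝ) (hε : 0 < ε) (r : ℕ) (hr : 0 < r) :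
    ∃ (n : ℕ) (G T : SimpleGraph (Fin n)), maxDeg G = r ∧ T.IsTree ∧
      3 * (maxDeg G : ℝ) + numLeaves T - 2 < (1 + ε) * n ∧ ¬ Packs G T := by
  classical
  set m : ℕ := ⌈(3 * r : ℝ) / ε⌉₊ + 1 with hm
  set n : ℕ := m * (r + 1) with hn
  have hm1 : 1 ≤ m := Nat.le_add_left 1 _
  have hn2 : 2 ≤ n := le_trans (by omega) (Nat.mul_le_mul hm1 (le_refl (r + 1)))
  haveI : NeZero n := ⟨by omega⟩
  let e : Fin n ≃ Fin m × Fin (r + 1) := finProdFinEquiv.symm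
  let G : SimpleGraph (Fin n) :=
    { Adj := fun v w => (e v).1 = (e w).1 ∧ (e v).2 ≠ (e w).2
      symm := ⟨fun v w h => ⟨h.1.symm, h.2.symm⟩⟩
      loopless := ⟨fun v h => h.2 rfl⟩ }
  have hdeg : ∀ v, deg G v = r := by
    intro v
    have eqv : G.neighborSet v ≃ {d : Fin (r + 1) // ¬ d = (e v).2} :=
      { toFun := fun w => ⟨(e w.1).2, fun h => w.2.2 h.symm⟩
        invFun := fun d => ⟨e.symm ((e v).1, d.1), by
          show (e v).1 = (e (e.symm ((e v).1, d.1))).1 ∧ (e v).2 ≠ (e (e.symm ((e v).1, d.1))).2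
          simp only [Equiv.apply_symm_apply]
          exact ⟨trivial, fun h => d.2 h.symm⟩⟩
        left_inv := by
          rintro ⟨w, hw⟩
          have h1 : (e w).1 = (e v).1 := hw.1.symm
          apply Subtype.ext
          show e.symm ((e v).1, (e w).2) = w
          rw [← h1]
          exact e.symm_apply_apply w
        right_inv := by
          rintro ⟨d, hd⟩
          apply Subtype.ext
          show (e (e.symm ((e v).1, d))).2 = d
          simp }
    rw [deg, Nat.card_congr eqv, Nat.card_eq_fintype_card,
      Fintype.card_subtype_compl, Fintype.card_subtype_eq, Fintype.card_fin]
    omega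
  have hmax : maxDeg G = r := by
    have : deg G = fun _ => r := funext hdeg
    rw [maxDeg, this, Set.range_const, csSup_singleton]
  refine ⟨n, G, _root_.starGraph n, hmax, star_tree hn2, ?_, ?_⟩
  · -- numeric inequality
    have hL : (numLeaves (_root_.starGraph n) : ℝ) ≤ n := by
      have : numLeaves (_root_.starGraph n) ≤ n := by
        rw [numLeaves, Nat.card_eq_fintype_card]
        simpa using Fintype.card_subtype_le (fun v : Fin n => deg (_root_.starGraph n) v = 1)
      exact_mod_cast this
    have hmn : (m : ℝ) ≤ n := by
      have : m ≤ n := Nat.le_mul_of_pos_right m (by omega)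
      exact_mod_cast this
    have hceil : (3 * r : ℝ) / ε < m := by
      have := Nat.le_ceil ((3 * r : ℝ) / ε)
      have : ((⌈(3 * r : ℝ) / ε⌉₊ : ℝ)) < m := by
        rw [hm]; push_cast; linarith
      linarith [Nat.le_ceil ((3 * r : ℝ) / ε)]
    have h3r : (3 * r : ℝ) < ε * n := by
      have h1 : (3 * r : ℝ) < ε * m := by
        rw [div_lt_iff₀ hε] at hceil
        linarith
      have h2 : ε * (m : ℝ) ≤ ε * n := by
        exact mul_le_mul_of_nonneg_left hmn (le_of_lt hε)
      linarith
    rw [hmax]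
    push_cast
    nlinarith [hL, h3r]
  · -- non-packing
    rintro ⟨f, hf⟩
    have hnt : Nontrivial (Fin (r + 1)) := Fin.nontrivial_iff_two_le.2 (by omega)
    obtain ⟨d, hd⟩ := exists_ne (e (f 0)).2
    set w : Fin n := e.symm ((e (f 0)).1, d) with hw
    have hadj : G.Adj (f 0) w := by
      show (e (f 0)).1 = (e w).1 ∧ (e (f 0)).2 ≠ (e w).2
      rw [hw]
      simp only [Equiv.apply_symm_apply]
      exact ⟨trivial, fun h => hd h.symm⟩
    have hwne : w ≠ f 0 := fun h => G.loopless.irrefl (f 0) (h ▸ hadj)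
    set y : Fin n := f.symm w with hy
    have hy0 : y ≠ 0 := by
      intro h
      apply hwne
      rw [← f.apply_symm_apply w, ← hy, h]
    have hTadj : (_root_.starGraph n).Adj 0 y := (star_adj 0 y).2 ⟨Ne.symm hy0, Or.inl rfl⟩
    have := hf 0 y hTadj
    rw [hy, f.apply_symm_apply] at this
    exact this hadj
end

section
/- Let T be a tree of order t and let π = (d_1, …, d_n) be a nonincreasing graphic sequence with n ≥ t. If d_{t-1} ≥ t - 1, then π has a realization containing T as a subgraph. -/
open SimpleGraph
open scoped Classical

lemma deg_eq_degree {V : Type} [Fintype V] (G : SimpleGraph V) (v : V) :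
    deg G v = G.degree v := by
  rw [deg, ← SimpleGraph.card_neighborSet_eq_degree, Nat.card_eq_fintype_card]

-- neighbor outside a finset
lemma exists_nbr_outside {V : Type} [Fintype V] (G : SimpleGraph V) (v : V)
    (S : Finset V) (h : S.card < G.degree v) : ∃ w, G.Adj v w ∧ w ∉ S := by
  by_contra hc
  push_neg at hc
  have hsub : G.neighborFinset v ⊆ S := by
    intro w hw
    exact hc w (by rwa [SimpleGraph.mem_neighborFinset] at hw)
  have := Finset.card_le_card hsub
  rw [SimpleGraph.card_neighborFinset_eq_degree] at this
  omega

section Switch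
variable {V : Type} [Fintype V]

lemma find_d (G : SimpleGraph V) (a b c : V)
    (hab : ¬ G.Adj a b) (hne : a ≠ b) (hac : G.Adj a c) (hdeg : G.degree c ≤ G.degree b) :
    ∃ d, G.Adj b d ∧ ¬ G.Adj c d ∧ d ≠ c ∧ d ≠ a := by
  set Nb := G.neighborFinset b with hNb
  set Nc := G.neighborFinset c with hNc
  have haNc : a ∈ Nc := by simp [hNc, hac.symm]
  have haNb : a ∉ Nb := by simp [hNb]; intro h; exact hab h.symm
  have hbNb : b ∉ Nb := by simp [hNb]
  have key : ∃ d ∈ Nb, d ∉ Nc ∧ d ≠ c := by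
    by_cases hbc : G.Adj b c
    · -- insert b (insert a (Nb ∩ Nc)) ⊆ Nc
      have hsub : insert b (insert a (Nb ∩ Nc)) ⊆ Nc := by
        intro x hx
        simp only [Finset.mem_insert] at hx
        rcases hx with rfl | rfl | hx
        · simp [hNc, hbc.symm]
        · exact haNc
        · exact (Finset.mem_inter.1 hx).2
      have hcard : (Nb ∩ Nc).card + 2 ≤ Nc.card := by
        have h1 := Finset.card_le_card hsub
        rw [Finset.card_insert_of_notMem, Finset.card_insert_of_notMem] at h1
        · omega
        · intro h; exact haNb (Finset.mem_inter.1 h).1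
        · simp only [Finset.mem_insert]
          rintro (rfl | h)
          · exact hne rfl
          · exact hbNb (Finset.mem_inter.1 h).1
      have hsd : 2 ≤ (Nb \ Nc).card := by
        have h2 := Finset.card_sdiff_add_card_inter Nb Nc
        have hb : Nc.card = G.degree c := by simp [hNc]
        have hb' : Nb.card = G.degree b := by simp [hNb]
        omega
      have hb : Nc.card = G.degree c := by simp [hNc]
      have hb' : Nb.card = G.degree b := by simp [hNb]
      have herase : 1 ≤ ((Nb \ Nc).erase c).card := by
        have := Finset.pred_card_le_card_erase (s := Nb \ Nc) (a := c)
        omega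
      obtain ⟨d, hd⟩ := Finset.card_pos.1 (show 0 < ((Nb \ Nc).erase c).card by omega)
      rw [Finset.mem_erase, Finset.mem_sdiff] at hd
      exact ⟨d, hd.2.1, hd.2.2, hd.1⟩
    · have hsub : insert a (Nb ∩ Nc) ⊆ Nc := by
        intro x hx
        simp only [Finset.mem_insert] at hx
        rcases hx with rfl | hx
        · exact haNc
        · exact (Finset.mem_inter.1 hx).2
      have hcard : (Nb ∩ Nc).card + 1 ≤ Nc.card := by
        have h1 := Finset.card_le_card hsub
        rw [Finset.card_insert_of_notMem] at h1
        · omega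
        · intro h; exact haNb (Finset.mem_inter.1 h).1
      have hsd : 1 ≤ (Nb \ Nc).card := by
        have := Finset.card_sdiff_add_card_inter Nb Nc
        have hb : Nc.card = G.degree c := by simp [hNc]
        have hb' : Nb.card = G.degree b := by simp [hNb]
        omega
      obtain ⟨d, hd⟩ := Finset.card_pos.1 (show 0 < (Nb \ Nc).card by omega)
      rw [Finset.mem_sdiff] at hd
      refine ⟨d, hd.1, hd.2, ?_⟩
      rintro rfl
      exact hbc (by simpa [hNb] using hd.1)
  obtain ⟨d, hd1, hd2, hd3⟩ := key
  refine ⟨d, by simpa [hNb] using hd1, by simpa [hNc] using hd2, hd3, ?_⟩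
  rintro rfl
  exact haNb hd1

/-- The 2-switch: add edges ab, cd; remove ac, bd. -/
def switchGraph (G : SimpleGraph V) (a b c d : V) : SimpleGraph V where
  Adj x y := (G.Adj x y ∧ ¬((x=a∧y=c)∨(x=c∧y=a)∨(x=b∧y=d)∨(x=d∧y=b)))
    ∨ (x ≠ y ∧ ((x=a∧y=b)∨(x=b∧y=a)∨(x=c∧y=d)∨(x=d∧y=c)))
  symm := by
    refine ⟨fun x y h => ?_⟩
    rcases h with ⟨h1, h2⟩ | h
    · exact Or.inl ⟨h1.symm, by tauto⟩
    · exact Or.inr ⟨Ne.symm h.1, by tauto⟩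
  loopless := by
    refine ⟨fun x h => ?_⟩
    rcases h with ⟨h1, _⟩ | ⟨h1, _⟩
    · exact h1.ne rfl
    · exact h1 rfl

lemma switch_main (G : SimpleGraph V) (a b c : V)
    (hab : ¬ G.Adj a b) (hne : a ≠ b) (hac : G.Adj a c) (hdeg : G.degree c ≤ G.degree b) :
    ∃ G' : SimpleGraph V, (∀ v, G'.degree v = G.degree v) ∧ G'.Adj a b ∧
      (∀ x y, G.Adj x y → x ≠ b → y ≠ b → x ≠ c → y ≠ c → G'.Adj x y) := by
  obtain ⟨d, hbd, hcd, hdc, hda⟩ := find_d G a b c hab hne hac hdeg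
  have hac' : a ≠ c := hac.ne
  have hbc : b ≠ c := by rintro rfl; exact hab hac
  have hbd' : b ≠ d := hbd.ne
  have had : a ≠ d := fun h => hda h.symm
  have hcd' : c ≠ d := fun h => hdc h.symm
  set G' := switchGraph G a b c d with hG'
  have hadj : ∀ x y, G'.Adj x y ↔ ((G.Adj x y ∧ ¬((x=a∧y=c)∨(x=c∧y=a)∨(x=b∧y=d)∨(x=d∧y=b)))
    ∨ (x ≠ y ∧ ((x=a∧y=b)∨(x=b∧y=a)∨(x=c∧y=d)∨(x=d∧y=c)))) := fun x y => Iff.rfl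
  have nf_a : G'.neighborFinset a = insert b ((G.neighborFinset a).erase c) := by
    ext w
    simp only [SimpleGraph.mem_neighborFinset, Finset.mem_insert, Finset.mem_erase]
    rw [hadj]
    constructor
    · rintro (⟨hG, hn⟩ | ⟨hxy, (⟨-, rfl⟩|⟨h,-⟩|⟨h,-⟩|⟨h,-⟩)⟩)
      · exact Or.inr ⟨fun hwc => hn (Or.inl ⟨rfl, hwc⟩), hG⟩
      · exact Or.inl rfl
      · exact absurd h hne
      · exact absurd h hac'
      · exact absurd h had
    · rintro (rfl | ⟨hwc, hG⟩)
      · exact Or.inr ⟨hne, Or.inl ⟨rfl, rfl⟩⟩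
      · refine Or.inl ⟨hG, ?_⟩
        rintro (⟨-, rfl⟩|⟨h,-⟩|⟨h,-⟩|⟨h,-⟩)
        · exact hwc rfl
        · exact hac' h
        · exact hne h
        · exact had h
  have nf_b : G'.neighborFinset b = insert a ((G.neighborFinset b).erase d) := by
    ext w
    simp only [SimpleGraph.mem_neighborFinset, Finset.mem_insert, Finset.mem_erase]
    rw [hadj]
    constructor
    · rintro (⟨hG, hn⟩ | ⟨hxy, (⟨h,-⟩|⟨-, rfl⟩|⟨h,-⟩|⟨h,-⟩)⟩)
      · exact Or.inr ⟨fun hwd => hn (Or.inr (Or.inr (Or.inl ⟨rfl, hwd⟩))), hG⟩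
      · exact absurd h hne.symm
      · exact Or.inl rfl
      · exact absurd h hbc
      · exact absurd h hbd'
    · rintro (rfl | ⟨hwd, hG⟩)
      · exact Or.inr ⟨hne.symm, Or.inr (Or.inl ⟨rfl, rfl⟩)⟩
      · refine Or.inl ⟨hG, ?_⟩
        rintro (⟨h,-⟩|⟨h,-⟩|⟨-, rfl⟩|⟨h,-⟩)
        · exact hne.symm h
        · exact hbc h
        · exact hwd rfl
        · exact hbd' h
  have nf_c : G'.neighborFinset c = insert d ((G.neighborFinset c).erase a) := by
    ext w
    simp only [SimpleGraph.mem_neighborFinset, Finset.mem_insert, Finset.mem_erase]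
    rw [hadj]
    constructor
    · rintro (⟨hG, hn⟩ | ⟨hxy, (⟨h,-⟩|⟨h,-⟩|⟨-, rfl⟩|⟨h,-⟩)⟩)
      · exact Or.inr ⟨fun hwa => hn (Or.inr (Or.inl ⟨rfl, hwa⟩)), hG⟩
      · exact absurd h hac'.symm
      · exact absurd h hbc.symm
      · exact Or.inl rfl
      · exact absurd h hcd'
    · rintro (rfl | ⟨hwa, hG⟩)
      · exact Or.inr ⟨hcd', Or.inr (Or.inr (Or.inl ⟨rfl, rfl⟩))⟩
      · refine Or.inl ⟨hG, ?_⟩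
        rintro (⟨h,-⟩|⟨-, rfl⟩|⟨h,-⟩|⟨h,-⟩)
        · exact hac'.symm h
        · exact hwa rfl
        · exact hbc.symm h
        · exact hcd' h
  have nf_d : G'.neighborFinset d = insert c ((G.neighborFinset d).erase b) := by
    ext w
    simp only [SimpleGraph.mem_neighborFinset, Finset.mem_insert, Finset.mem_erase]
    rw [hadj]
    constructor
    · rintro (⟨hG, hn⟩ | ⟨hxy, (⟨h,-⟩|⟨h,-⟩|⟨h,-⟩|⟨-, rfl⟩)⟩)
      · exact Or.inr ⟨fun hwb => hn (Or.inr (Or.inr (Or.inr ⟨rfl, hwb⟩))), hG⟩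
      · exact absurd h had.symm
      · exact absurd h hbd'.symm
      · exact absurd h hcd'.symm
      · exact Or.inl rfl
    · rintro (rfl | ⟨hwb, hG⟩)
      · exact Or.inr ⟨fun h => hcd' h.symm, Or.inr (Or.inr (Or.inr ⟨rfl, rfl⟩))⟩
      · refine Or.inl ⟨hG, ?_⟩
        rintro (⟨h,-⟩|⟨h,-⟩|⟨h,-⟩|⟨-, rfl⟩)
        · exact had.symm h
        · exact hcd'.symm h
        · exact hbd'.symm h
        · exact hwb rfl
  have nf_o : ∀ v, v ≠ a → v ≠ b → v ≠ c → v ≠ d →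
      G'.neighborFinset v = G.neighborFinset v := by
    intro v h1 h2 h3 h4
    ext w
    simp only [SimpleGraph.mem_neighborFinset]
    rw [hadj]
    constructor
    · rintro (⟨hG, -⟩ | ⟨-, (⟨h,-⟩|⟨h,-⟩|⟨h,-⟩|⟨h,-⟩)⟩)
      · exact hG
      · exact absurd h h1
      · exact absurd h h2
      · exact absurd h h3
      · exact absurd h h4
    · intro hG
      refine Or.inl ⟨hG, ?_⟩
      rintro (⟨h,-⟩|⟨h,-⟩|⟨h,-⟩|⟨h,-⟩)
      · exact h1 h
      · exact h3 h
      · exact h2 h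
      · exact h4 h
  refine ⟨G', ?_, ?_, ?_⟩
  · intro v
    rw [← SimpleGraph.card_neighborFinset_eq_degree, ← SimpleGraph.card_neighborFinset_eq_degree]
    by_cases h1 : v = a
    · rw [h1, nf_a, Finset.card_insert_of_notMem, Finset.card_erase_of_mem]
      · have hpos : 0 < (G.neighborFinset a).card :=
          Finset.card_pos.2 ⟨c, by simpa [SimpleGraph.mem_neighborFinset] using hac⟩
        omega
      · simpa [SimpleGraph.mem_neighborFinset] using hac
      · simp only [Finset.mem_erase, SimpleGraph.mem_neighborFinset]
        rintro ⟨-, h⟩; exact hab h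
    by_cases h2 : v = b
    · rw [h2, nf_b, Finset.card_insert_of_notMem, Finset.card_erase_of_mem]
      · have hpos : 0 < (G.neighborFinset b).card :=
          Finset.card_pos.2 ⟨d, by simpa [SimpleGraph.mem_neighborFinset] using hbd⟩
        omega
      · simpa [SimpleGraph.mem_neighborFinset] using hbd
      · simp only [Finset.mem_erase, SimpleGraph.mem_neighborFinset]
        rintro ⟨-, h⟩; exact hab h.symm
    by_cases h3 : v = c
    · rw [h3, nf_c, Finset.card_insert_of_notMem, Finset.card_erase_of_mem]
      · have hpos : 0 < (G.neighborFinset c).card :=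
          Finset.card_pos.2 ⟨a, by simpa [SimpleGraph.mem_neighborFinset] using hac.symm⟩
        omega
      · simpa [SimpleGraph.mem_neighborFinset] using hac.symm
      · simp only [Finset.mem_erase, SimpleGraph.mem_neighborFinset]
        rintro ⟨-, h⟩; exact hcd h
    by_cases h4 : v = d
    · rw [h4, nf_d, Finset.card_insert_of_notMem, Finset.card_erase_of_mem]
      · have hpos : 0 < (G.neighborFinset d).card :=
          Finset.card_pos.2 ⟨b, by simpa [SimpleGraph.mem_neighborFinset] using hbd.symm⟩
        omega
      · simpa [SimpleGraph.mem_neighborFinset] using hbd.symm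
      · simp only [Finset.mem_erase, SimpleGraph.mem_neighborFinset]
        rintro ⟨-, h⟩; exact hcd h.symm
    rw [nf_o v h1 h2 h3 h4]
  · exact (hadj a b).2 (Or.inr ⟨hne, by tauto⟩)
  · intro x y h hxb hyb hxc hyc
    refine (hadj x y).2 (Or.inl ⟨h, ?_⟩)
    rintro ((⟨rfl,rfl⟩)|(⟨rfl,rfl⟩)|(⟨rfl,rfl⟩)|(⟨rfl,rfl⟩)) <;> tauto
end Switch

section TreePart
variable {W : Type} [Fintype W]

lemma exists_leaf_s7 (T : SimpleGraph W) (hT : T.IsTree) (h2 : 2 ≤ Fintype.card W) :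
    ∃ v, T.degree v = 1 := by
  have hdegpos : ∀ v : W, 0 < T.degree v := by
    intro v
    rw [SimpleGraph.degree_pos_iff_exists_adj]
    obtain ⟨w, hw⟩ := Fintype.exists_ne_of_one_lt_card (by omega) v
    obtain ⟨p⟩ := hT.isConnected.preconnected v w
    cases p with
    | nil => exact absurd rfl hw.symm
    | cons h q => exact ⟨_, h⟩
  by_contra hc
  push_neg at hc
  have h2d : ∀ v : W, 2 ≤ T.degree v := by
    intro v
    have := hdegpos v
    have := hc v
    omega
  have hsum := T.sum_degrees_eq_twice_card_edges
  have hedge := hT.card_edgeFinset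
  have hge : 2 * Fintype.card W ≤ ∑ v, T.degree v := by
    calc 2 * Fintype.card W = ∑ _v : W, 2 := by
          rw [Finset.sum_const, Finset.card_univ]; ring
      _ ≤ ∑ v, T.degree v := Finset.sum_le_sum (fun v _ => h2d v)
  omega

lemma tree_order (T : SimpleGraph W) (hT : T.IsTree) {t : ℕ}
    (hcard : Fintype.card W = t) (ht : 2 ≤ t) :
    ∃ (ℓ : W) (u : Fin (t-1) → W) (par : Fin (t-1) → Fin (t-1)),
      Function.Injective u ∧ (∀ i, u i ≠ ℓ) ∧ (∀ w, w ≠ ℓ → ∃ i, u i = w) ∧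
      T.Adj (u ⟨0, by omega⟩) ℓ ∧
      (∀ i : Fin (t-1), i ≠ ⟨0, by omega⟩ → par i < i ∧ T.Adj (u (par i)) (u i)) ∧
      (∀ x y : W, T.Adj x y →
        (x = ℓ ∧ y = u ⟨0, by omega⟩) ∨ (y = ℓ ∧ x = u ⟨0, by omega⟩) ∨
        (∃ i, i ≠ ⟨0, by omega⟩ ∧ (x = u (par i) ∧ y = u i ∨ y = u (par i) ∧ x = u i))) := by
  haveI : NeZero (t-1) := ⟨by omega⟩
  obtain ⟨ℓ, hℓ⟩ := exists_leaf_s7 T hT (by omega)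
  -- unique neighbor p₀
  obtain ⟨p₀, hp₀⟩ : ∃ p₀, T.neighborFinset ℓ = {p₀} :=
    Finset.card_eq_one.1 (by rw [SimpleGraph.card_neighborFinset_eq_degree]; exact hℓ)
  have hadjp₀ : T.Adj ℓ p₀ := by
    have : p₀ ∈ T.neighborFinset ℓ := by rw [hp₀]; exact Finset.mem_singleton_self _
    rwa [SimpleGraph.mem_neighborFinset] at this
  have huniq : ∀ w, T.Adj ℓ w → w = p₀ := by
    intro w hw
    have : w ∈ T.neighborFinset ℓ := by rwa [SimpleGraph.mem_neighborFinset]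
    rw [hp₀, Finset.mem_singleton] at this
    exact this
  -- unique paths to p₀
  choose P hP hP' using (hT.existsUnique_path · p₀)
  set depth : W → ℕ := fun w => (P w).length with hdepth
  have hd0 : ∀ w, depth w = 0 → w = p₀ := fun w h => SimpleGraph.Walk.eq_of_length_eq_zero h
  have hdp₀ : depth p₀ = 0 := by
    have : (SimpleGraph.Walk.nil : T.Walk p₀ p₀) = P p₀ :=
      hP' p₀ SimpleGraph.Walk.nil SimpleGraph.Walk.IsPath.nil
    simp [hdepth, ← this]
  -- claim C : adjacency and smaller depth forces parent
  have claimC : ∀ x y, T.Adj x y → depth y ≤ depth x →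
      (P x).getVert 1 = y ∧ depth x = depth y + 1 := by
    intro x y hxy hle
    by_cases hx : x ∈ (P y).support
    · exfalso
      have hQ := (hP y).takeUntil hx
      have hR := (hP y).dropUntil hx
      have hRP : (P y).dropUntil x hx = P x := hP' x _ hR
      have hspec := SimpleGraph.Walk.take_spec (P y) hx
      have hlen : ((P y).takeUntil x hx).length + ((P y).dropUntil x hx).length
          = (P y).length := by
        conv_rhs => rw [← hspec]
        rw [SimpleGraph.Walk.length_append]
      have hpos : 0 < ((P y).takeUntil x hx).length := by
        rcases Nat.eq_zero_or_pos ((P y).takeUntil x hx).length with h0 | h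
        · exact absurd (SimpleGraph.Walk.eq_of_length_eq_zero h0) hxy.ne'
        · exact h
      have : depth y = ((P y).takeUntil x hx).length + depth x := by
        rw [hdepth]; simp only []
        rw [← hlen, hRP]
      omega
    · have hcons : (SimpleGraph.Walk.cons hxy (P y)).IsPath := (hP y).cons hx
      have heq : SimpleGraph.Walk.cons hxy (P y) = P x := hP' x _ hcons
      constructor
      · rw [← heq]
        simp [SimpleGraph.Walk.getVert_cons_succ, SimpleGraph.Walk.getVert_zero]
      · rw [hdepth]; simp only []
        rw [← heq, SimpleGraph.Walk.length_cons]
  -- parent existence for x ≠ p₀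
  have hparent : ∀ x, x ≠ p₀ → ∃ y, T.Adj x y ∧ depth x = depth y + 1 ∧
      (∀ z, T.Adj x z → depth z ≤ depth x → z = y) := by
    intro x hx
    cases hPx : P x with
    | nil => exact absurd rfl hx
    | @cons _ y _ h q =>
      have hq : q.IsPath := by
        have := hP x
        rw [hPx] at this
        exact this.of_cons
      have hqP : q = P y := hP' y q hq
      have hdeq : depth x = depth y + 1 := by
        rw [hdepth]; simp only []
        rw [hPx, SimpleGraph.Walk.length_cons, hqP]
      refine ⟨y, h, hdeq, ?_⟩
      intro z hz hzle
      have h1 := (claimC x z hz hzle).1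
      have h2 := (claimC x y h (by omega)).1
      rw [← h1, ← h2]
  -- sort the non-ℓ vertices by depth
  have hp0ne : p₀ ≠ ℓ := fun h => hadjp₀.ne h.symm
  have hcard' : Fintype.card {w : W // w ≠ ℓ} = t - 1 := by
    have h1 := Fintype.card_subtype_compl (fun w : W => w = ℓ)
    have h2 : Fintype.card {w : W // w = ℓ} = 1 := Fintype.card_subtype_eq ℓ
    rw [h1, h2, hcard]
  set e : Fin (t-1) ≃ {w : W // w ≠ ℓ} := (Fintype.equivFinOfCardEq hcard').symm with he
  set f : Fin (t-1) → ℕ := fun i => depth ((e i).val) with hf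
  set σ := Tuple.sort f with hσ
  have hmono := Tuple.monotone_sort f
  set u : Fin (t-1) → W := fun i => ((e (σ i)) : W) with hu
  have hu_inj : Function.Injective u := by
    intro i j h
    exact σ.injective (e.injective (Subtype.ext h))
  have hu_ne : ∀ i, u i ≠ ℓ := fun i => (e (σ i)).2
  have hu_surj : ∀ w, w ≠ ℓ → ∃ i, u i = w := by
    intro w hw
    exact ⟨σ.symm (e.symm ⟨w, hw⟩), by simp [hu]⟩
  have hmono' : ∀ i j : Fin (t-1), i ≤ j → depth (u i) ≤ depth (u j) := by
    intro i j h
    exact hmono h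
  set z0 : Fin (t-1) := ⟨0, by omega⟩ with hz0
  have hu0 : u z0 = p₀ := by
    obtain ⟨i₀, hi₀⟩ := hu_surj p₀ hp0ne
    have h1 : depth (u z0) ≤ depth (u i₀) := hmono' _ _ (by simp [hz0, Fin.le_def])
    rw [hi₀, hdp₀] at h1
    exact hd0 _ (Nat.le_zero.1 h1)
  have hpar_ex : ∀ i : Fin (t-1), i ≠ z0 → ∃ j : Fin (t-1), j < i ∧ T.Adj (u j) (u i) ∧
      (∀ z, T.Adj (u i) z → depth z ≤ depth (u i) → z = u j) := by
    intro i hi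
    have hne : u i ≠ p₀ := by
      rw [← hu0]
      exact fun h => hi (hu_inj h)
    obtain ⟨y, hy1, hy2, hy3⟩ := hparent (u i) hne
    have hyne : y ≠ ℓ := by
      rintro rfl
      exact hne (huniq (u i) hy1.symm)
    obtain ⟨j, hj⟩ := hu_surj y hyne
    have hji : j < i := by
      by_contra hc
      have := hmono' i j (not_lt.1 hc)
      rw [hj] at this
      omega
    refine ⟨j, hji, by rw [hj]; exact hy1.symm, ?_⟩
    intro z hz hzle
    rw [hj]
    exact hy3 z hz hzle
  choose par' hpar using hpar_ex
  set par : Fin (t-1) → Fin (t-1) := fun i => if h : i = z0 then z0 else par' i h with hpardef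
  have hparval : ∀ i (h : i ≠ z0), par i = par' i h := by
    intro i h
    simp [hpardef, h]
  refine ⟨ℓ, u, par, hu_inj, hu_ne, hu_surj, ?_, ?_, ?_⟩
  · rw [hu0]; exact hadjp₀.symm
  · intro i hi
    rw [hparval i hi]
    exact ⟨(hpar i hi).1, (hpar i hi).2.1⟩
  · intro x y hxy
    by_cases hx : x = ℓ
    · subst hx
      exact Or.inl ⟨rfl, by rw [hu0]; exact huniq y hxy⟩
    by_cases hy : y = ℓ
    · subst hy
      exact Or.inr (Or.inl ⟨rfl, by rw [hu0]; exact huniq x hxy.symm⟩)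
    obtain ⟨i, hi⟩ := hu_surj x hx
    obtain ⟨j, hj⟩ := hu_surj y hy
    rcases le_total (depth y) (depth x) with hle | hle
    · have hxp : x ≠ p₀ := by
        rintro rfl
        have h0 : depth y = 0 := by rw [hdp₀] at hle; omega
        exact hxy.ne (hd0 y h0).symm
      have hiz : i ≠ z0 := by
        rintro rfl
        rw [hu0] at hi
        exact hxp hi.symm
      have huy : y = u (par' i hiz) := (hpar i hiz).2.2 y (by rw [hi]; exact hxy) (by rw [hi]; exact hle)
      refine Or.inr (Or.inr ⟨i, hiz, Or.inr ⟨?_, hi.symm⟩⟩)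
      rw [hparval i hiz]
      exact huy
    · have hyp : y ≠ p₀ := by
        rintro rfl
        have h0 : depth x = 0 := by rw [hdp₀] at hle; omega
        exact hxy.ne (hd0 x h0)
      have hjz : j ≠ z0 := by
        rintro rfl
        rw [hu0] at hj
        exact hyp hj.symm
      have hux : x = u (par' j hjz) := (hpar j hjz).2.2 x (by rw [hj]; exact hxy.symm) (by rw [hj]; exact hle)
      refine Or.inr (Or.inr ⟨j, hjz, Or.inl ⟨?_, hj.symm⟩⟩)
      rw [hparval j hjz]
      exact hux

end TreePart

lemma high_deg {t n : ℕ} (π : Fin n → ℕ) (hmono : Antitone π)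
    (d2 : Fin n) (hd : t - 1 ≤ π d2) (G : SimpleGraph (Fin n)) (hG : IsRealization G π)
    (v : Fin n) (hv : v.val ≤ d2.val) : t-1 ≤ G.degree v := by
  have h1 : π d2 ≤ π v := hmono (by rwa [Fin.le_def])
  have h2 := hG v
  rw [deg_eq_degree] at h2
  omega


lemma step_lemma {t n : ℕ} (ht : 2 ≤ t) (htn : t ≤ n) (π : Fin n → ℕ) (hmono : Antitone π)
    (d2 : Fin n) (hd2 : d2.val = t-2) (hd : t - 1 ≤ π d2)
    (i : ℕ) (h1 : 1 ≤ i) (h2 : i ≤ t-2)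
    (q r z : Fin n) (hq : q.val < i) (hr : r.val = i) (hz : z.val = 0)
    (G : SimpleGraph (Fin n)) (x : Fin n)
    (hG : IsRealization G π) (hx : i ≤ x.val) (hx0 : G.Adj z x) :
    ∃ (G' : SimpleGraph (Fin n)) (x' : Fin n), IsRealization G' π ∧ i+1 ≤ x'.val ∧
      G'.Adj z x' ∧ G'.Adj q r ∧
      (∀ a b : Fin n, G.Adj a b → a.val < i → b.val < i → G'.Adj a b) := by
  have hGdeg : ∀ v : Fin n, G.degree v = π v := by
    intro v; rw [← deg_eq_degree]; exact hG v
  have hdq : t-1 ≤ G.degree q := high_deg π hmono d2 hd G hG q (by omega)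
  have hd0 : t-1 ≤ G.degree z := high_deg π hmono d2 hd G hG z (by omega)
  have hqner : q ≠ r := by
    intro h
    rw [h] at hq
    omega
  obtain ⟨S, hmemS, hcardS⟩ : ∃ S : Finset (Fin n),
      (∀ v : Fin n, v ∈ S ↔ v.val ≤ i) ∧ S.card = i + 1 := by
    refine ⟨(Finset.range (i+1)).attachFin (fun m hm => by
      rw [Finset.mem_range] at hm; omega), ?_, ?_⟩
    · intro v
      rw [Finset.mem_attachFin, Finset.mem_range]
      omega
    · rw [Finset.card_attachFin, Finset.card_range]
  by_cases hadjqr : G.Adj q r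
  · by_cases hxi : x.val = i
    · have hcd : (S.erase z).card < G.degree z := by
        have hh := Finset.card_erase_of_mem ((hmemS z).2 (by omega))
        omega
      obtain ⟨x', hx'1, hx'2⟩ := exists_nbr_outside G z (S.erase z) hcd
      have hx'S : x' ∉ S := by
        intro h
        exact hx'2 (Finset.mem_erase.2 ⟨hx'1.ne', h⟩)
      refine ⟨G, x', hG, ?_, hx'1, hadjqr, fun a b h _ _ => h⟩
      have := (hmemS x').not.1 hx'S
      omega
    · exact ⟨G, x, hG, by omega, hx0, hadjqr, fun a b h _ _ => h⟩
  · have hrS : r ∈ S := (hmemS r).2 (by omega)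
    have hqS : q ∈ S := (hmemS q).2 (by omega)
    have hcd : (((insert x S).erase q).erase r).card < G.degree q := by
      have e1 : ((insert x S).erase q).card = (insert x S).card - 1 :=
        Finset.card_erase_of_mem (Finset.mem_insert_of_mem hqS)
      have e2 : r ∈ (insert x S).erase q :=
        Finset.mem_erase.2 ⟨fun h => hqner h.symm, Finset.mem_insert_of_mem hrS⟩
      have e3 : (((insert x S).erase q).erase r).card = ((insert x S).erase q).card - 1 :=
        Finset.card_erase_of_mem e2
      have e4 : (insert x S).card ≤ i + 2 := by
        have := Finset.card_insert_le x S
        omega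
      omega
    obtain ⟨c, hc1, hc2⟩ := exists_nbr_outside G q _ hcd
    have hcq : c ≠ q := hc1.ne'
    have hcr : c ≠ r := by
      intro h
      rw [h] at hc1
      exact hadjqr hc1
    have hcS : c ∉ insert x S := by
      intro h
      exact hc2 (Finset.mem_erase.2 ⟨hcr, Finset.mem_erase.2 ⟨hcq, h⟩⟩)
    have hcx : c ≠ x := fun h => hcS (h ▸ Finset.mem_insert_self x S)
    have hcval : i + 1 ≤ c.val := by
      have hc3 : c ∉ S := fun h => hcS (Finset.mem_insert_of_mem h)
      have := (hmemS c).not.1 hc3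
      omega
    have hdegcr : G.degree c ≤ G.degree r := by
      rw [hGdeg, hGdeg]
      exact hmono (by rw [Fin.le_def]; omega)
    obtain ⟨G', hdeg', hQR, hpres⟩ := switch_main G q r c hadjqr hqner hc1 hdegcr
    have hG' : IsRealization G' π := by
      intro v
      rw [deg_eq_degree, hdeg', ← deg_eq_degree]
      exact hG v
    have hpres' : ∀ a b : Fin n, G.Adj a b → a.val < i → b.val < i → G'.Adj a b := by
      intro a b h ha hb
      refine hpres a b h ?_ ?_ ?_ ?_ <;> intro hh <;> subst hh <;> omega
    by_cases hxi : x.val = i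
    · have hcd0 : (S.erase z).card < G'.degree z := by
        have hh := Finset.card_erase_of_mem ((hmemS z).2 (by omega))
        rw [hdeg' z]
        omega
      obtain ⟨x', hx'1, hx'2⟩ := exists_nbr_outside G' z (S.erase z) hcd0
      have hx'S : x' ∉ S := by
        intro h
        exact hx'2 (Finset.mem_erase.2 ⟨hx'1.ne', h⟩)
      refine ⟨G', x', hG', ?_, hx'1, hQR, hpres'⟩
      have := (hmemS x').not.1 hx'S
      omega
    · refine ⟨G', x, hG', by omega, ?_, hQR, hpres'⟩
      refine hpres z x hx0 ?_ ?_ ?_ ?_ <;> intro hh <;> subst hh <;> omega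

def slot {t n : ℕ} (htn : t ≤ n) (j : Fin (t-1)) : Fin n :=
  ⟨j.val, lt_of_lt_of_le j.isLt (le_trans (Nat.sub_le t 1) htn)⟩

@[simp] lemma slot_val {t n : ℕ} (htn : t ≤ n) (j : Fin (t-1)) :
    (slot htn j).val = j.val := rfl

set_option maxHeartbeats 1000000 in
/-- If π is graphic of length n ≥ t with d_{t-1} ≥ t-1, then π is potentially T-graphic
for any tree T of order t. -/
theorem tree_potentially {t n : ℕ} {W : Type} [Fintype W] (T : SimpleGraph W)
    (hT : T.IsTree) (hcard : Fintype.card W = t) (ht : 2 ≤ t) (htn : t ≤ n)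
    (π : Fin n → ℕ) (hmono : Antitone π) (hg : Graphic π)
    (hd : t - 1 ≤ π ⟨t - 2, by omega⟩) :
    PotentiallyGraphic π T := by
  obtain ⟨ℓ, u, par, hu_inj, hu_ne, hu_surj, hadj0, hpar, hcover⟩ := tree_order T hT hcard ht
  obtain ⟨z, hzval⟩ : ∃ z : Fin n, z.val = 0 := ⟨⟨0, by omega⟩, rfl⟩
  obtain ⟨d2, hd2val⟩ : ∃ d2 : Fin n, d2.val = t - 2 := ⟨⟨t-2, by omega⟩, rfl⟩
  have hd' : t - 1 ≤ π d2 := by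
    have e : d2 = (⟨t-2, by omega⟩ : Fin n) := Fin.ext hd2val
    rw [e]
    exact hd
  -- adapted parent facts
  have hpar' : ∀ j : Fin (t-1), 0 < j.val → (par j).val < j.val ∧ T.Adj (u (par j)) (u j) := by
    intro j hj
    have h := hpar j (by
      intro h
      rw [h] at hj
      simp at hj)
    exact ⟨h.1, h.2⟩
  -- the induction
  have main : ∀ i, 1 ≤ i → i ≤ t - 1 →
      ∃ (G : SimpleGraph (Fin n)) (x : Fin n), IsRealization G π ∧ i ≤ x.val ∧
        G.Adj z x ∧
        ∀ j : Fin (t-1), j.val < i → 0 < j.val →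
          G.Adj (slot htn (par j)) (slot htn j) := by
    intro i h1 h2
    induction i with
    | zero => omega
    | succ k ih =>
      rcases Nat.lt_or_ge k 1 with hk | hk
      · -- base case: k = 0
        obtain ⟨G, hG⟩ := hg
        have hpos : 0 < G.degree z := by
          have := high_deg π hmono d2 hd' G hG z (by omega)
          omega
        obtain ⟨x, hx⟩ := (SimpleGraph.degree_pos_iff_exists_adj (G := G) (v := z)).1 hpos
        refine ⟨G, x, hG, ?_, hx, ?_⟩
        · have hne : x.val ≠ 0 := by
            intro h
            exact hx.ne' (Fin.ext (by omega))
          omega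
        · intro j hj hj0
          omega
      · -- inductive step
        obtain ⟨G, x, hG, hx, hx0, hprev⟩ := ih (by omega) (by omega)
        obtain ⟨jj, hjjval⟩ : ∃ jj : Fin (t-1), jj.val = k := ⟨⟨k, by omega⟩, rfl⟩
        have hjpar := hpar' jj (by omega)
        obtain ⟨G', x', hG', hx', hx0', hQR, hpres⟩ :=
          step_lemma ht htn π hmono d2 hd2val hd' k hk (by omega)
            (slot htn (par jj)) (slot htn jj) z (by simp; omega) (by simp; omega) hzval
            G x hG hx hx0
        refine ⟨G', x', hG', hx', hx0', ?_⟩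
        intro j hj hj0
        rcases Nat.lt_or_ge j.val k with hlt | hge
        · exact hpres _ _ (hprev j hlt hj0) (by simpa using (hpar' j hj0).1.trans hlt)
            (by simpa using hlt)
        · have : j = jj := Fin.ext (by omega)
          rw [this]
          exact hQR
  obtain ⟨G, x, hG, hx, hx0, hedges⟩ := main (t-1) (by omega) le_rfl
  -- build the embedding
  choose idx hidx using hu_surj
  have hFex : ∃ F : W → Fin n, F ℓ = x ∧ (∀ i : Fin (t-1), F (u i) = slot htn i) ∧
      Function.Injective F := by
    refine ⟨fun w => if h : w = ℓ then x else slot htn (idx w h), dif_pos rfl, ?_, ?_⟩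
    · intro i
      have h1 : u i ≠ ℓ := hu_ne i
      have h2 : idx (u i) h1 = i := hu_inj (hidx (u i) h1)
      simp only [dif_neg h1, h2]
    · intro a b hab
      simp only [] at hab
      by_cases ha : a = ℓ <;> by_cases hb : b = ℓ
      · rw [ha, hb]
      · exfalso
        rw [dif_pos ha, dif_neg hb] at hab
        have h3 : (slot htn (idx b hb)).val < t - 1 := by simp
        rw [← hab] at h3
        omega
      · exfalso
        rw [dif_neg ha, dif_pos hb] at hab
        have h3 : (slot htn (idx a ha)).val < t - 1 := by simp
        rw [hab] at h3
        omega
      · rw [dif_neg ha, dif_neg hb] at hab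
        have h3 : idx a ha = idx b hb := Fin.ext (by
          have := congrArg Fin.val hab
          simpa using this)
        rw [← hidx a ha, ← hidx b hb, h3]
  obtain ⟨F, hFl, hFu, hFinj⟩ := hFex
  refine ⟨G, hG, ⟨F, hFinj⟩, ?_⟩
  intro a b hab
  simp only [Function.Embedding.coeFn_mk]
  have hzmk : ∀ j : Fin (t-1), j.val = 0 → slot htn j = z := by
    intro j hj
    exact Fin.ext (by simp [hj, hzval])
  rcases hcover a b hab with ⟨ha, hb⟩ | ⟨hb, ha⟩ | ⟨i, hi, ⟨ha, hb⟩ | ⟨hb, ha⟩⟩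
  · rw [ha, hb, hFl, hFu, hzmk _ rfl]
    exact hx0.symm
  · rw [ha, hb, hFl, hFu, hzmk _ rfl]
    exact hx0
  · rw [ha, hb, hFu, hFu]
    exact hedges i i.isLt (Nat.pos_of_ne_zero (fun h => hi (Fin.ext (by simp [h]))))
  · rw [ha, hb, hFu, hFu]
    exact (hedges i i.isLt (Nat.pos_of_ne_zero (fun h => hi (Fin.ext (by simp [h]))))).symm
end
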